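/- arXiv:2010.07430 — 10 statements merged into one kernel-verified Lean document; each statement's English description precedes it below -/
import Mathlib

section
/- Fix a load g > 0 and δ ∈ [0,1]. In the SA-DPC model with M slots and N = ⌊gM⌋ users, the expected number of decoded packets divided by M converges, as M → ∞, to gδ·exp(−gδ) + (1 + gδ)·g(1−δ)·exp(−g). -/
open scoped Classical
open Filter

/-- Number of high-power packets in slot `s` under configuration `ω`
(each user's configuration is a pair (slot, high-power?)). -/
def highCount {M N : ℕ} (ω : Fin N → Fin M × Bool) (s : Fin M) : ℕ :=
  (Finset.univ.filter fun v : Fin N => (ω v).1 = s ∧ (ω v).2 = true).card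

/-- Number of low-power packets in slot `s` under configuration `ω`. -/
def lowCount {M N : ℕ} (ω : Fin N → Fin M × Bool) (s : Fin M) : ℕ :=
  (Finset.univ.filter fun v : Fin N => (ω v).1 = s ∧ (ω v).2 = false).card

/-- User `u` is decoded: a high-power packet is decoded iff it is the unique high-power
packet in its slot; a low-power packet is decoded iff it is the unique low-power packet
in its slot and the slot contains at most one high-power packet. -/
def sadpcDecoded {M N : ℕ} (ω : Fin N → Fin M × Bool) (u : Fin N) : Prop :=
  ((ω u).2 = true ∧ highCount ω (ω u).1 = 1) ∨
    ((ω u).2 = false ∧ lowCount ω (ω u).1 = 1 ∧ highCount ω (ω u).1 ≤ 1)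

/-- Probability of configuration `ω`: each user independently picks a uniform slot and is
high-power with probability `δ`, low-power with probability `1 - δ`. -/
noncomputable def sadpcWeight (M N : ℕ) (δ : ℝ) (ω : Fin N → Fin M × Bool) : ℝ :=
  ∏ _u : Fin N, (1 / (M : ℝ)) * (if (ω _u).2 then δ else 1 - δ)

/-- Expected number of decoded packets in the SA-DPC model with `M` slots, `N` users and
high-power probability `δ`. -/
noncomputable def sadpcExpected (M N : ℕ) (δ : ℝ) : ℝ :=
  ∑ ω : Fin N → Fin M × Bool,
    sadpcWeight M N δ ω * ((Finset.univ.filter fun u : Fin N => sadpcDecoded ω u).card : ℝ)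


namespace SADPC

variable {M N : ℕ}

noncomputable def indH (u : Fin N) (s : Fin M) (v : Fin N) (b : Fin M × Bool) : ℝ :=
  if v = u then (if b = (s, true) then 1 else 0) else (if b = (s, true) then 0 else 1)

noncomputable def indL0 (u : Fin N) (s : Fin M) (v : Fin N) (b : Fin M × Bool) : ℝ :=
  if v = u then (if b = (s, false) then 1 else 0) else (if b.1 = s then 0 else 1)

noncomputable def indL1 (u v0 : Fin N) (s : Fin M) (v : Fin N) (b : Fin M × Bool) : ℝ :=
  if v = u then (if b = (s, false) then 1 else 0)
  else if v = v0 then (if b = (s, true) then 1 else 0)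
  else (if b.1 = s then 0 else 1)

lemma card_filter_one {p : Fin N → Prop} [DecidablePred p] {u : Fin N} (hu : p u) :
    (Finset.univ.filter p).card = 1 ↔ ∀ v, v ≠ u → ¬ p v := by
  constructor
  · intro h v hv hp
    rw [Finset.card_eq_one] at h
    obtain ⟨a, ha⟩ := h
    have h1 : u ∈ Finset.univ.filter p := by simp [hu]
    have h2 : v ∈ Finset.univ.filter p := by simp [hp]
    rw [ha, Finset.mem_singleton] at h1 h2
    exact hv (h2.trans h1.symm)
  · intro h
    rw [Finset.card_eq_one]
    refine ⟨u, ?_⟩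
    ext v
    simp only [Finset.mem_filter, Finset.mem_univ, true_and, Finset.mem_singleton]
    constructor
    · intro hp; by_contra hv; exact h v hv hp
    · rintro rfl; exact hu

lemma indicator_decomp (ω : Fin N → Fin M × Bool) (u : Fin N) :
    (if sadpcDecoded ω u then (1:ℝ) else 0) =
      ∑ s : Fin M, ((∏ v, indH u s v (ω v)) + (∏ v, indL0 u s v (ω v))
        + ∑ v0 ∈ Finset.univ.erase u, ∏ v, indL1 u v0 s v (ω v)) := by
  have hprod : ∀ (s : Fin M), s ≠ (ω u).1 →
      ((∏ v, indH u s v (ω v)) + (∏ v, indL0 u s v (ω v))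
        + ∑ v0 ∈ Finset.univ.erase u, ∏ v, indL1 u v0 s v (ω v)) = 0 := by
    intro s hs
    have hne : ω u ≠ (s, true) := fun h => hs (by rw [h])
    have hne' : ω u ≠ (s, false) := fun h => hs (by rw [h])
    have h1 : ∏ v, indH u s v (ω v) = 0 :=
      Finset.prod_eq_zero (Finset.mem_univ u) (by simp [indH, hne])
    have h2 : ∏ v, indL0 u s v (ω v) = 0 :=
      Finset.prod_eq_zero (Finset.mem_univ u) (by simp [indL0, hne'])
    have h3 : ∀ v0 ∈ Finset.univ.erase u, (∏ v, indL1 u v0 s v (ω v)) = 0 := by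
      intro v0 _
      exact Finset.prod_eq_zero (Finset.mem_univ u) (by simp [indL1, hne'])
    rw [h1, h2, Finset.sum_eq_zero h3]; ring
  rw [Finset.sum_eq_single_of_mem (ω u).1 (Finset.mem_univ _)
    (fun s _ hs => hprod s hs)]
  by_cases hb : (ω u).2 = true
  · -- high-power case
    have hωu : ω u = ((ω u).1, true) := by rw [← hb]
    have hne : ω u ≠ ((ω u).1, false) := by
      intro h; rw [h] at hb; simp at hb
    have hL0 : ∏ v, indL0 u (ω u).1 v (ω v) = 0 :=
      Finset.prod_eq_zero (Finset.mem_univ u) (by simp [indL0, hne])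
    have hL1 : ∀ v0 ∈ Finset.univ.erase u, (∏ v, indL1 u v0 (ω u).1 v (ω v)) = 0 := by
      intro v0 _
      exact Finset.prod_eq_zero (Finset.mem_univ u) (by simp [indL1, hne])
    rw [hL0, Finset.sum_eq_zero hL1, add_zero, add_zero]
    have hdec : sadpcDecoded ω u ↔ highCount ω (ω u).1 = 1 := by
      unfold sadpcDecoded
      simp [hb]
    unfold highCount at hdec
    by_cases hc : (Finset.univ.filter
        fun v : Fin N => (ω v).1 = (ω u).1 ∧ (ω v).2 = true).card = 1
    · rw [if_pos (hdec.mpr hc)]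
      symm
      refine Finset.prod_eq_one fun v _ => ?_
      unfold indH
      by_cases hv : v = u
      · rw [if_pos hv, hv, if_pos hωu]
      · rw [if_neg hv, if_neg]
        intro h
        exact (card_filter_one (p := fun v : Fin N => (ω v).1 = (ω u).1 ∧ (ω v).2 = true)
          (u := u) ⟨rfl, hb⟩).mp hc v hv ⟨by rw [h], by rw [h]⟩
    · rw [if_neg (fun h => hc (hdec.mp h))]
      symm
      have hu : u ∈ Finset.univ.filter
          fun v : Fin N => (ω v).1 = (ω u).1 ∧ (ω v).2 = true := by simp [hb]
      have hge : 1 < (Finset.univ.filter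
          fun v : Fin N => (ω v).1 = (ω u).1 ∧ (ω v).2 = true).card := by
        have h1 : 0 < (Finset.univ.filter
            fun v : Fin N => (ω v).1 = (ω u).1 ∧ (ω v).2 = true).card :=
          Finset.card_pos.mpr ⟨u, hu⟩
        omega
      obtain ⟨v, hv, hvu⟩ := Finset.exists_mem_ne hge u
      simp only [Finset.mem_filter, Finset.mem_univ, true_and] at hv
      refine Finset.prod_eq_zero (Finset.mem_univ v) ?_
      have hωv : ω v = ((ω u).1, true) := by rw [← hv.1, ← hv.2]
      simp [indH, hvu, hωv]
  · -- low-power case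
    have hb' : (ω u).2 = false := by simp at hb; exact hb
    have hωu : ω u = ((ω u).1, false) := by rw [← hb']
    have hne : ω u ≠ ((ω u).1, true) := by
      intro h; rw [h] at hb'; simp at hb'
    have hH : ∏ v, indH u (ω u).1 v (ω v) = 0 :=
      Finset.prod_eq_zero (Finset.mem_univ u) (by simp [indH, hne])
    rw [hH, zero_add]
    have hdec : sadpcDecoded ω u ↔
        lowCount ω (ω u).1 = 1 ∧ highCount ω (ω u).1 ≤ 1 := by
      unfold sadpcDecoded
      simp [hb']
    unfold lowCount highCount at hdec
    set Hs := (Finset.univ.filter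
        fun v : Fin N => (ω v).1 = (ω u).1 ∧ (ω v).2 = true) with hHs
    set Ls := (Finset.univ.filter
        fun v : Fin N => (ω v).1 = (ω u).1 ∧ (ω v).2 = false) with hLs
    have huL : u ∈ Ls := by rw [hLs]; simp [hb']
    by_cases hc : Ls.card = 1 ∧ Hs.card ≤ 1
    · rw [if_pos (hdec.mpr hc)]
      have hc1 := hc.1
      rw [hLs] at hc1
      have hlow : ∀ v, v ≠ u → ¬((ω v).1 = (ω u).1 ∧ (ω v).2 = false) :=
        (card_filter_one (p := fun v : Fin N => (ω v).1 = (ω u).1 ∧ (ω v).2 = false)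
          (u := u) ⟨rfl, hb'⟩).mp hc1
      rcases Nat.le_one_iff_eq_zero_or_eq_one.mp hc.2 with h0 | h1
      · -- no high packet in the slot
        have hempty : ∀ v : Fin N, ¬((ω v).1 = (ω u).1 ∧ (ω v).2 = true) := by
          intro v hv
          have : v ∈ Hs := by rw [hHs]; simp [hv.1, hv.2]
          rw [Finset.card_eq_zero.mp h0] at this
          simp at this
        have hnotin : ∀ v, v ≠ u → (ω v).1 ≠ (ω u).1 := by
          intro v hv hv1
          cases hbv : (ω v).2 with
          | false => exact hlow v hv ⟨hv1, hbv⟩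
          | true => exact hempty v ⟨hv1, hbv⟩
        have hL0 : ∏ v, indL0 u (ω u).1 v (ω v) = 1 := by
          refine Finset.prod_eq_one fun v _ => ?_
          unfold indL0
          by_cases hv : v = u
          · rw [if_pos hv, hv, if_pos hωu]
          · rw [if_neg hv, if_neg (hnotin v hv)]
        have hL1 : ∀ v0 ∈ Finset.univ.erase u, (∏ v, indL1 u v0 (ω u).1 v (ω v)) = 0 := by
          intro v0 hv0
          have hv0u : v0 ≠ u := Finset.ne_of_mem_erase hv0
          refine Finset.prod_eq_zero (Finset.mem_univ v0) ?_
          have : ω v0 ≠ ((ω u).1, true) := by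
            intro h
            exact hempty v0 ⟨by rw [h], by rw [h]⟩
          simp [indL1, hv0u, this]
        rw [hL0, Finset.sum_eq_zero hL1, add_zero]
      · -- exactly one high packet w
        obtain ⟨w, hw⟩ := Finset.card_eq_one.mp h1
        have hwmem : w ∈ Hs := by rw [hw]; simp
        rw [hHs, Finset.mem_filter] at hwmem
        have hwu : w ≠ u := by
          intro h; rw [h, hb'] at hwmem; simp at hwmem
        have hωw : ω w = ((ω u).1, true) := by rw [← hwmem.2.1, ← hwmem.2.2]
        have honly : ∀ v, v ≠ w → ¬((ω v).1 = (ω u).1 ∧ (ω v).2 = true) := by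
          intro v hv hvp
          have : v ∈ Hs := by rw [hHs]; simp [hvp.1, hvp.2]
          rw [hw, Finset.mem_singleton] at this
          exact hv this
        have hnotin : ∀ v, v ≠ u → v ≠ w → (ω v).1 ≠ (ω u).1 := by
          intro v hv hvw hv1
          cases hbv : (ω v).2 with
          | false => exact hlow v hv ⟨hv1, hbv⟩
          | true => exact honly v hvw ⟨hv1, hbv⟩
        have hL0 : ∏ v, indL0 u (ω u).1 v (ω v) = 0 := by
          refine Finset.prod_eq_zero (Finset.mem_univ w) ?_
          have : (ω w).1 = (ω u).1 := hwmem.2.1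
          simp [indL0, hwu, this]
        have hL1 : ∑ v0 ∈ Finset.univ.erase u, (∏ v, indL1 u v0 (ω u).1 v (ω v)) = 1 := by
          rw [Finset.sum_eq_single_of_mem w (Finset.mem_erase.mpr ⟨hwu, Finset.mem_univ w⟩)]
          · refine Finset.prod_eq_one fun v _ => ?_
            unfold indL1
            by_cases hv : v = u
            · rw [if_pos hv, hv, if_pos hωu]
            · rw [if_neg hv]
              by_cases hvw : v = w
              · rw [if_pos hvw, hvw, if_pos hωw]
              · rw [if_neg hvw, if_neg (hnotin v hv hvw)]
          · intro v0 hv0 hv0w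
            have hv0u : v0 ≠ u := Finset.ne_of_mem_erase hv0
            refine Finset.prod_eq_zero (Finset.mem_univ v0) ?_
            have : ω v0 ≠ ((ω u).1, true) := by
              intro h
              exact honly v0 hv0w ⟨by rw [h], by rw [h]⟩
            simp [indL1, hv0u, this]
        rw [hL0, hL1, zero_add]
    · -- not decoded
      rw [if_neg (fun h => hc (hdec.mp h))]
      symm
      have hcases : Ls.card ≠ 1 ∨ 1 < Hs.card := by
        by_contra h
        push_neg at h
        exact hc ⟨h.1, h.2⟩
      rcases hcases with h2 | h2
      · -- at least two low packets
        have hge : 1 < Ls.card := by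
          have : 0 < Ls.card := Finset.card_pos.mpr ⟨u, huL⟩
          omega
        obtain ⟨v, hv, hvu⟩ := Finset.exists_mem_ne hge u
        rw [hLs, Finset.mem_filter] at hv
        have hL0 : ∏ w, indL0 u (ω u).1 w (ω w) = 0 :=
          Finset.prod_eq_zero (Finset.mem_univ v) (by simp [indL0, hvu, hv.2.1])
        have hL1 : ∀ v0 ∈ Finset.univ.erase u, (∏ w, indL1 u v0 (ω u).1 w (ω w)) = 0 := by
          intro v0 hv0
          by_cases hvv0 : v = v0
          · subst hvv0
            refine Finset.prod_eq_zero (Finset.mem_univ v) ?_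
            have : ω v ≠ ((ω u).1, true) := by
              intro h
              have h2 : (ω v).2 = true := by rw [h]
              rw [hv.2.2] at h2; simp at h2
            simp [indL1, hvu, this]
          · refine Finset.prod_eq_zero (Finset.mem_univ v) ?_
            simp [indL1, hvu, hvv0, hv.2.1]
        rw [hL0, Finset.sum_eq_zero hL1]; ring
      · -- at least two high packets
        obtain ⟨v, hv, -⟩ := Finset.exists_mem_ne h2 u
        rw [hHs, Finset.mem_filter] at hv
        have hvu : v ≠ u := by
          intro h; rw [h, hb'] at hv; simp at hv
        have hL0 : ∏ w, indL0 u (ω u).1 w (ω w) = 0 :=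
          Finset.prod_eq_zero (Finset.mem_univ v) (by simp [indL0, hvu, hv.2.1])
        have hL1 : ∀ v0 ∈ Finset.univ.erase u, (∏ w, indL1 u v0 (ω u).1 w (ω w)) = 0 := by
          intro v0 hv0
          obtain ⟨x, hx, hxv0⟩ := Finset.exists_mem_ne h2 v0
          rw [hHs, Finset.mem_filter] at hx
          have hxu : x ≠ u := by
            intro h; rw [h, hb'] at hx; simp at hx
          refine Finset.prod_eq_zero (Finset.mem_univ x) ?_
          simp [indL1, hxu, hxv0, hx.2.1]
        rw [hL0, Finset.sum_eq_zero hL1]; ring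

noncomputable def F (M : ℕ) (δ : ℝ) : Fin M × Bool → ℝ :=
  fun b => (1 / (M:ℝ)) * (if b.2 then δ else 1 - δ)

lemma sum_F (hM : 0 < M) (δ : ℝ) : ∑ b : Fin M × Bool, F M δ b = 1 := by
  rw [Fintype.sum_prod_type]
  have hM' : (M:ℝ) ≠ 0 := Nat.cast_ne_zero.mpr hM.ne'
  simp [F, Finset.sum_const, Finset.card_univ]
  field_simp
  ring

lemma sum_F_pair (δ : ℝ) (c : Fin M × Bool) :
    ∑ b : Fin M × Bool, F M δ b * (if b = c then 1 else 0) = F M δ c := by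
  simp [mul_ite]

lemma sum_F_npair (hM : 0 < M) (δ : ℝ) (c : Fin M × Bool) :
    ∑ b : Fin M × Bool, F M δ b * (if b = c then 0 else 1) = 1 - F M δ c := by
  have h : ∀ b : Fin M × Bool, F M δ b * (if b = c then 0 else 1)
      = F M δ b - F M δ b * (if b = c then 1 else 0) := by
    intro b; by_cases h : b = c <;> simp [h]
  rw [Finset.sum_congr rfl (fun b _ => h b), Finset.sum_sub_distrib, sum_F hM, sum_F_pair]

lemma sum_F_nslot (hM : 0 < M) (δ : ℝ) (s : Fin M) :
    ∑ b : Fin M × Bool, F M δ b * (if b.1 = s then 0 else 1) = 1 - 1/(M:ℝ) := by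
  have h : ∀ b : Fin M × Bool, F M δ b * (if b.1 = s then 0 else 1)
      = F M δ b - (F M δ b * (if b = (s, true) then 1 else 0)
        + F M δ b * (if b = (s, false) then 1 else 0)) := by
    intro b
    by_cases h1 : b.1 = s
    · cases hb2 : b.2 with
      | true =>
        have hb : b = (s, true) := by rw [← h1, ← hb2]
        simp [hb]
      | false =>
        have hb : b = (s, false) := by rw [← h1, ← hb2]
        simp [hb]
    · have hb : b ≠ (s, true) := fun h => h1 (by rw [h])
      have hb' : b ≠ (s, false) := fun h => h1 (by rw [h])
      simp [hb, hb', h1]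
  rw [Finset.sum_congr rfl (fun b _ => h b), Finset.sum_sub_distrib, sum_F hM,
    Finset.sum_add_distrib, sum_F_pair, sum_F_pair]
  have hM' : (M:ℝ) ≠ 0 := Nat.cast_ne_zero.mpr hM.ne'
  simp [F]
  field_simp
  ring

lemma F_pair_true (δ : ℝ) (s : Fin M) : F M δ (s, true) = δ / M := by
  simp [F]; ring

lemma F_pair_false (δ : ℝ) (s : Fin M) : F M δ (s, false) = (1 - δ) / M := by
  simp [F]; ring

lemma prod_pick1 (u : Fin N) (a b : ℝ) :
    (∏ v : Fin N, if v = u then a else b) = a * b ^ (N - 1) := by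
  rw [← Finset.mul_prod_erase _ _ (Finset.mem_univ u), if_pos rfl]
  congr 1
  rw [Finset.prod_congr rfl (fun v hv => if_neg (Finset.ne_of_mem_erase hv)),
    Finset.prod_const, Finset.card_erase_of_mem (Finset.mem_univ u),
    Finset.card_univ, Fintype.card_fin]

lemma prod_pick2 (u v0 : Fin N) (h : v0 ≠ u) (a c b : ℝ) :
    (∏ v : Fin N, if v = u then a else if v = v0 then c else b) = a * (c * b ^ (N - 2)) := by
  rw [← Finset.mul_prod_erase _ _ (Finset.mem_univ u), if_pos rfl]
  congr 1
  rw [← Finset.mul_prod_erase _ _ (Finset.mem_erase.mpr ⟨h, Finset.mem_univ v0⟩),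
    if_neg h, if_pos rfl]
  congr 1
  have : ∀ v ∈ (Finset.univ.erase u).erase v0,
      (if v = u then a else if v = v0 then c else b) = b := by
    intro v hv
    rw [if_neg (Finset.ne_of_mem_erase (Finset.mem_of_mem_erase hv)),
      if_neg (Finset.ne_of_mem_erase hv)]
  rw [Finset.prod_congr rfl this, Finset.prod_const,
    Finset.card_erase_of_mem (Finset.mem_erase.mpr ⟨h, Finset.mem_univ v0⟩),
    Finset.card_erase_of_mem (Finset.mem_univ u), Finset.card_univ, Fintype.card_fin]
  have : N - 1 - 1 = N - 2 := by omega
  rw [this]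

lemma sum_weight_prod (δ : ℝ) (ind : Fin N → Fin M × Bool → ℝ) :
    ∑ ω : Fin N → Fin M × Bool, sadpcWeight M N δ ω * ∏ v, ind v (ω v)
      = ∏ v : Fin N, ∑ b : Fin M × Bool, F M δ b * ind v b := by
  rw [Fintype.prod_sum (κ := fun _ : Fin N => Fin M × Bool)
    (f := fun v b => F M δ b * ind v b)]
  refine Finset.sum_congr rfl fun ω _ => ?_
  rw [sadpcWeight, ← Finset.prod_mul_distrib]
  exact Finset.prod_congr rfl fun v _ => by simp [F]


lemma eval_H (hM : 0 < M) (δ : ℝ) (u : Fin N) (s : Fin M) (v : Fin N) :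
    ∑ b : Fin M × Bool, F M δ b * indH u s v b
      = if v = u then δ/(M:ℝ) else 1 - δ/(M:ℝ) := by
  by_cases hv : v = u
  · rw [if_pos hv]
    have h : ∀ b : Fin M × Bool, indH u s v b = if b = (s, true) then 1 else 0 :=
      fun b => by rw [indH, if_pos hv]
    rw [Finset.sum_congr rfl fun b _ => by rw [h b], sum_F_pair, F_pair_true]
  · rw [if_neg hv]
    have h : ∀ b : Fin M × Bool, indH u s v b = if b = (s, true) then 0 else 1 :=
      fun b => by rw [indH, if_neg hv]
    rw [Finset.sum_congr rfl fun b _ => by rw [h b], sum_F_npair hM, F_pair_true]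

lemma eval_L0 (hM : 0 < M) (δ : ℝ) (u : Fin N) (s : Fin M) (v : Fin N) :
    ∑ b : Fin M × Bool, F M δ b * indL0 u s v b
      = if v = u then (1-δ)/(M:ℝ) else 1 - 1/(M:ℝ) := by
  by_cases hv : v = u
  · rw [if_pos hv]
    have h : ∀ b : Fin M × Bool, indL0 u s v b = if b = (s, false) then 1 else 0 :=
      fun b => by rw [indL0, if_pos hv]
    rw [Finset.sum_congr rfl fun b _ => by rw [h b], sum_F_pair, F_pair_false]
  · rw [if_neg hv]
    have h : ∀ b : Fin M × Bool, indL0 u s v b = if b.1 = s then 0 else 1 :=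
      fun b => by rw [indL0, if_neg hv]
    rw [Finset.sum_congr rfl fun b _ => by rw [h b], sum_F_nslot hM]

lemma eval_L1 (hM : 0 < M) (δ : ℝ) (u v0 : Fin N) (s : Fin M) (v : Fin N) :
    ∑ b : Fin M × Bool, F M δ b * indL1 u v0 s v b
      = if v = u then (1-δ)/(M:ℝ) else if v = v0 then δ/(M:ℝ) else 1 - 1/(M:ℝ) := by
  by_cases hv : v = u
  · rw [if_pos hv]
    have h : ∀ b : Fin M × Bool, indL1 u v0 s v b = if b = (s, false) then 1 else 0 :=
      fun b => by rw [indL1, if_pos hv]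
    rw [Finset.sum_congr rfl fun b _ => by rw [h b], sum_F_pair, F_pair_false]
  · rw [if_neg hv]
    by_cases hv0 : v = v0
    · rw [if_pos hv0]
      have h : ∀ b : Fin M × Bool, indL1 u v0 s v b = if b = (s, true) then 1 else 0 :=
        fun b => by rw [indL1, if_neg hv, if_pos hv0]
      rw [Finset.sum_congr rfl fun b _ => by rw [h b], sum_F_pair, F_pair_true]
    · rw [if_neg hv0]
      have h : ∀ b : Fin M × Bool, indL1 u v0 s v b = if b.1 = s then 0 else 1 :=
        fun b => by rw [indL1, if_neg hv, if_neg hv0]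
      rw [Finset.sum_congr rfl fun b _ => by rw [h b], sum_F_nslot hM]

lemma sumH (hM : 0 < M) (δ : ℝ) (u : Fin N) (s : Fin M) :
    ∑ ω : Fin N → Fin M × Bool, sadpcWeight M N δ ω * ∏ v, indH u s v (ω v)
      = (δ/(M:ℝ)) * (1 - δ/(M:ℝ)) ^ (N - 1) := by
  rw [sum_weight_prod, Finset.prod_congr rfl fun v _ => eval_H hM δ u s v, prod_pick1]

lemma sumL0 (hM : 0 < M) (δ : ℝ) (u : Fin N) (s : Fin M) :
    ∑ ω : Fin N → Fin M × Bool, sadpcWeight M N δ ω * ∏ v, indL0 u s v (ω v)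
      = ((1-δ)/(M:ℝ)) * (1 - 1/(M:ℝ)) ^ (N - 1) := by
  rw [sum_weight_prod, Finset.prod_congr rfl fun v _ => eval_L0 hM δ u s v, prod_pick1]

lemma sumL1 (hM : 0 < M) (δ : ℝ) (u v0 : Fin N) (hv0 : v0 ≠ u) (s : Fin M) :
    ∑ ω : Fin N → Fin M × Bool, sadpcWeight M N δ ω * ∏ v, indL1 u v0 s v (ω v)
      = ((1-δ)/(M:ℝ)) * ((δ/(M:ℝ)) * (1 - 1/(M:ℝ)) ^ (N - 2)) := by
  rw [sum_weight_prod, Finset.prod_congr rfl fun v _ => eval_L1 hM δ u v0 s v,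
    prod_pick2 u v0 hv0]

lemma sadpcExpected_eq (hM : 0 < M) (δ : ℝ) :
    sadpcExpected M N δ = (N:ℝ) * ((M:ℝ) *
      ((δ/(M:ℝ)) * (1 - δ/(M:ℝ)) ^ (N - 1)
        + (((1-δ)/(M:ℝ)) * (1 - 1/(M:ℝ)) ^ (N - 1)
          + ((N-1 : ℕ):ℝ) * (((1-δ)/(M:ℝ)) * ((δ/(M:ℝ)) * (1 - 1/(M:ℝ)) ^ (N - 2)))))) := by
  have hw : ∀ ω : Fin N → Fin M × Bool, _root_.sadpcWeight M N δ ω = sadpcWeight M N δ ω :=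
    fun ω => rfl
  rw [sadpcExpected]
  have hcard : ∀ ω : Fin N → Fin M × Bool,
      ((Finset.univ.filter fun u : Fin N => sadpcDecoded ω u).card : ℝ)
        = ∑ u : Fin N, if sadpcDecoded ω u then (1:ℝ) else 0 := by
    intro ω
    rw [Finset.card_filter, Nat.cast_sum]
    exact Finset.sum_congr rfl fun u _ => by split <;> simp
  have step1 : ∑ ω : Fin N → Fin M × Bool,
      _root_.sadpcWeight M N δ ω * ((Finset.univ.filter
        fun u : Fin N => sadpcDecoded ω u).card : ℝ)
      = ∑ u : Fin N, ∑ ω : Fin N → Fin M × Bool,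
          sadpcWeight M N δ ω * (if sadpcDecoded ω u then (1:ℝ) else 0) := by
    rw [Finset.sum_comm]
    exact Finset.sum_congr rfl fun ω _ => by
      rw [hw ω, hcard ω, Finset.mul_sum]
  rw [step1]
  have step2 : ∀ u : Fin N, ∑ ω : Fin N → Fin M × Bool,
      sadpcWeight M N δ ω * (if sadpcDecoded ω u then (1:ℝ) else 0)
      = (M:ℝ) * ((δ/(M:ℝ)) * (1 - δ/(M:ℝ)) ^ (N - 1)
        + (((1-δ)/(M:ℝ)) * (1 - 1/(M:ℝ)) ^ (N - 1)
          + ((N-1 : ℕ):ℝ) * (((1-δ)/(M:ℝ)) * ((δ/(M:ℝ)) * (1 - 1/(M:ℝ)) ^ (N - 2))))) := by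
    intro u
    have e1 : ∑ ω : Fin N → Fin M × Bool,
        sadpcWeight M N δ ω * (if sadpcDecoded ω u then (1:ℝ) else 0)
        = ∑ s : Fin M, ∑ ω : Fin N → Fin M × Bool,
            (sadpcWeight M N δ ω * ∏ v, indH u s v (ω v)
              + sadpcWeight M N δ ω * ∏ v, indL0 u s v (ω v)
              + ∑ v0 ∈ Finset.univ.erase u,
                  sadpcWeight M N δ ω * ∏ v, indL1 u v0 s v (ω v)) := by
      rw [Finset.sum_comm]
      refine Finset.sum_congr rfl fun ω _ => ?_
      rw [indicator_decomp ω u, Finset.mul_sum]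
      refine Finset.sum_congr rfl fun s _ => ?_
      rw [mul_add, mul_add, Finset.mul_sum]
    rw [e1]
    have e2 : ∀ s : Fin M, ∑ ω : Fin N → Fin M × Bool,
        (sadpcWeight M N δ ω * ∏ v, indH u s v (ω v)
          + sadpcWeight M N δ ω * ∏ v, indL0 u s v (ω v)
          + ∑ v0 ∈ Finset.univ.erase u,
              sadpcWeight M N δ ω * ∏ v, indL1 u v0 s v (ω v))
        = (δ/(M:ℝ)) * (1 - δ/(M:ℝ)) ^ (N - 1)
          + (((1-δ)/(M:ℝ)) * (1 - 1/(M:ℝ)) ^ (N - 1)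
            + ((N-1 : ℕ):ℝ) * (((1-δ)/(M:ℝ)) * ((δ/(M:ℝ)) * (1 - 1/(M:ℝ)) ^ (N - 2)))) := by
      intro s
      rw [Finset.sum_add_distrib, Finset.sum_add_distrib, sumH hM, sumL0 hM]
      have e3 : ∑ ω : Fin N → Fin M × Bool, ∑ v0 ∈ Finset.univ.erase u,
          sadpcWeight M N δ ω * ∏ v, indL1 u v0 s v (ω v)
          = ((N-1 : ℕ):ℝ) * (((1-δ)/(M:ℝ)) * ((δ/(M:ℝ)) * (1 - 1/(M:ℝ)) ^ (N - 2))) := by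
        rw [Finset.sum_comm]
        rw [Finset.sum_congr rfl fun v0 hv0 => sumL1 hM δ u v0 (Finset.ne_of_mem_erase hv0) s]
        rw [Finset.sum_const, Finset.card_erase_of_mem (Finset.mem_univ u),
          Finset.card_univ, Fintype.card_fin, nsmul_eq_mul]
      rw [e3]
      ring
    rw [Finset.sum_congr rfl fun s _ => e2 s, Finset.sum_const, Finset.card_univ,
      Fintype.card_fin, nsmul_eq_mul]
  rw [Finset.sum_congr rfl fun u _ => step2 u, Finset.sum_const, Finset.card_univ,
    Fintype.card_fin, nsmul_eq_mul]

end SADPC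

/-- The asymptotic throughput of SA-DPC at load `g` with power-choice probability `δ` is
`gδ e^{-gδ} + (1+gδ) g(1-δ) e^{-g}`. -/
theorem sa_dpc_asymptotic_throughput (g δ : ℝ) (hg : 0 < g) (hδ : δ ∈ Set.Icc (0 : ℝ) 1) :
    Tendsto (fun M : ℕ => sadpcExpected M ⌊g * (M : ℝ)⌋₊ δ / (M : ℝ)) atTop
      (nhds (g * δ * Real.exp (-(g * δ)) +
        (1 + g * δ) * (g * (1 - δ)) * Real.exp (-g))) := by
  obtain ⟨hδ0, hδ1⟩ := hδ
  have hN : Tendsto (fun M : ℕ => ((⌊g * (M:ℝ)⌋₊ : ℕ) : ℝ) / M) atTop (nhds g) :=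
    (tendsto_nat_floor_mul_div_atTop hg.le).comp tendsto_natCast_atTop_atTop
  have hNtop : Tendsto (fun M : ℕ => ⌊g * (M:ℝ)⌋₊) atTop atTop :=
    tendsto_nat_floor_mul_atTop g hg
  have hNsub : ∀ j : ℕ, Tendsto (fun M : ℕ => ((⌊g * (M:ℝ)⌋₊ - j : ℕ) : ℝ) / M)
      atTop (nhds g) := by
    intro j
    have h0 : Tendsto (fun M : ℕ => (j:ℝ) / M) atTop (nhds 0) :=
      tendsto_const_div_atTop_nhds_zero_nat (j:ℝ)
    have h1 := hN.sub h0
    rw [sub_zero] at h1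
    refine Tendsto.congr' ?_ h1
    filter_upwards [hNtop.eventually_ge_atTop j] with M hM
    rw [Nat.cast_sub hM, sub_div]
  have hExp : ∀ c : ℝ, 0 ≤ c → c ≤ 1 → ∀ j : ℕ,
      Tendsto (fun M : ℕ => (1 - c/(M:ℝ)) ^ (⌊g * (M:ℝ)⌋₊ - j)) atTop
        (nhds (Real.exp (-(g * c)))) := by
    intro c hc0 hc1 j
    have hlog : Tendsto (fun M : ℕ => (M:ℝ) * Real.log (1 + (-c)/(M:ℝ))) atTop
        (nhds (-c)) :=
      (Real.tendsto_mul_log_one_add_div_atTop (-c)).comp tendsto_natCast_atTop_atTop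
    have hmul := (hNsub j).mul hlog
    have hcomp := (Real.continuous_exp.tendsto _).comp hmul
    have harg : g * (-c) = -(g * c) := by ring
    rw [harg] at hcomp
    refine Tendsto.congr' ?_ hcomp
    filter_upwards [eventually_ge_atTop 2] with M hM2
    have hM0 : (0:ℝ) < M := by
      have : (2:ℝ) ≤ M := by exact_mod_cast hM2
      linarith
    have hpos : 0 < 1 - c/(M:ℝ) := by
      have h2 : (2:ℝ) ≤ M := by exact_mod_cast hM2
      have : c / (M:ℝ) < 1 := (div_lt_one hM0).mpr (by linarith)
      linarith
    show Real.exp (((⌊g * (M:ℝ)⌋₊ - j : ℕ) : ℝ)/(M:ℝ) * ((M:ℝ) * Real.log (1 + (-c)/(M:ℝ))))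
      = (1 - c/(M:ℝ)) ^ (⌊g * (M:ℝ)⌋₊ - j)
    have harg2 : ((⌊g * (M:ℝ)⌋₊ - j : ℕ) : ℝ)/M * ((M:ℝ) * Real.log (1 + (-c)/(M:ℝ)))
        = ((⌊g * (M:ℝ)⌋₊ - j : ℕ) : ℝ) * Real.log (1 - c/(M:ℝ)) := by
      rw [neg_div, ← sub_eq_add_neg]
      field_simp
    rw [harg2, ← Real.log_pow, Real.exp_log (pow_pos hpos _)]
  have hE1 := hExp δ hδ0 hδ1 1
  have hE := hExp 1 zero_le_one le_rfl 1
  have hE2 := hExp 1 zero_le_one le_rfl 2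
  rw [mul_one] at hE hE2
  have hT : Tendsto (fun M : ℕ =>
      ((⌊g * (M:ℝ)⌋₊ : ℕ) : ℝ)/M * δ * (1 - δ/(M:ℝ)) ^ (⌊g * (M:ℝ)⌋₊ - 1)
      + (((⌊g * (M:ℝ)⌋₊ : ℕ) : ℝ)/M * (1 - δ) * (1 - 1/(M:ℝ)) ^ (⌊g * (M:ℝ)⌋₊ - 1)
        + ((⌊g * (M:ℝ)⌋₊ : ℕ) : ℝ)/M * (((⌊g * (M:ℝ)⌋₊ - 1 : ℕ) : ℝ)/M)
          * ((1 - δ) * δ) * (1 - 1/(M:ℝ)) ^ (⌊g * (M:ℝ)⌋₊ - 2))) atTop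
      (nhds (g * δ * Real.exp (-(g * δ))
        + (g * (1 - δ) * Real.exp (-g) + g * g * ((1 - δ) * δ) * Real.exp (-g)))) :=
    ((hN.mul_const δ).mul hE1).add
      (((hN.mul_const (1 - δ)).mul hE).add
        ((((hN.mul (hNsub 1)).mul_const ((1 - δ) * δ)).mul hE2)))
  have hVeq : g * δ * Real.exp (-(g * δ))
      + (g * (1 - δ) * Real.exp (-g) + g * g * ((1 - δ) * δ) * Real.exp (-g))
      = g * δ * Real.exp (-(g * δ)) + (1 + g * δ) * (g * (1 - δ)) * Real.exp (-g) := by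
    ring
  rw [hVeq] at hT
  refine Tendsto.congr' ?_ hT
  filter_upwards [eventually_ge_atTop 1] with M hM1
  have hM : 0 < M := hM1
  have hM0 : ((M:ℝ)) ≠ 0 := Nat.cast_ne_zero.mpr hM.ne'
  rw [SADPC.sadpcExpected_eq hM δ]
  field_simp
end

section
/- Fix a load g > 0, an integer n ≥ 1, and a probability vector (δ₁, …, δₙ) with δᵢ ≥ 0 and ∑ᵢ δᵢ = 1. In the SA-nPC model with M slots and N = ⌊gM⌋ users, the expected number of decoded packets divided by M converges, as M → ∞, to ∑_{i=1}^{n} ( ∏_{j=1}^{i−1} (1 + gδⱼ)·exp(−gδⱼ) ) · gδᵢ·exp(−gδᵢ). -/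
open scoped Classical
open Filter

/-- Number of packets of power level `i` in slot `s` under configuration `ω`
(each user's configuration is a pair (slot, power level); level `0` is the strongest). -/
def levelCount {M N n : ℕ} (ω : Fin N → Fin M × Fin n) (s : Fin M) (i : Fin n) : ℕ :=
  (Finset.univ.filter fun v : Fin N => (ω v).1 = s ∧ (ω v).2 = i).card

/-- User `u` is decoded: its packet (of level `i = (ω u).2`) is decoded iff it is the unique
level-`i` packet in its slot and, for every stronger level `j < i`, the slot contains at most
one level-`j` packet. -/
def sanpcDecoded {M N n : ℕ} (ω : Fin N → Fin M × Fin n) (u : Fin N) : Prop :=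
  levelCount ω (ω u).1 (ω u).2 = 1 ∧
    ∀ j : Fin n, j < (ω u).2 → levelCount ω (ω u).1 j ≤ 1

/-- Probability of configuration `ω`: each user independently picks a uniform slot and a
power level `i` with probability `δ i`. -/
noncomputable def sanpcWeight (M N n : ℕ) (δ : Fin n → ℝ) (ω : Fin N → Fin M × Fin n) : ℝ :=
  ∏ u : Fin N, (1 / (M : ℝ)) * δ (ω u).2

/-- Expected number of decoded packets in the SA-nPC model with `M` slots, `N` users and
power-choice distribution `δ`. -/
noncomputable def sanpcExpected (M N n : ℕ) (δ : Fin n → ℝ) : ℝ :=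
  ∑ ω : Fin N → Fin M × Fin n,
    sanpcWeight M N n δ ω *
      ((Finset.univ.filter fun u : Fin N => sanpcDecoded ω u).card : ℝ)

def cnt {N : ℕ} {X : Type*} [DecidableEq X] (f : Fin N → X) (a : X) : ℕ :=
  (Finset.univ.filter fun v => f v = a).card

lemma cnt_cons {N : ℕ} {X : Type*} [DecidableEq X] (x : X) (f : Fin N → X) (a : X) :
    cnt (Fin.cons x f) a = (if x = a then 1 else 0) + cnt f a := by
  rw [cnt, Finset.card_filter, Fin.sum_univ_succ, Fin.cons_zero]
  simp only [Fin.cons_succ]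
  rw [cnt, Finset.card_filter]

lemma G_lemma {X : Type*} [Fintype X] [DecidableEq X] (p : X → ℝ) (A : Finset X) :
    ∀ (N : ℕ) (S : Finset X), S ⊆ A →
    (∑ f : Fin N → X, (∏ v, p (f v)) *
      (if (∀ a ∈ A, cnt f a = if a ∈ S then 1 else 0) then (1:ℝ) else 0))
      = (N.descFactorial S.card : ℝ) * (∏ a ∈ S, p a) *
        (∑ x ∈ Aᶜ, p x) ^ (N - S.card) := by
  intro N
  induction N with
  | zero =>
    intro S hSA
    rcases S.eq_empty_or_nonempty with rfl | ⟨a, ha⟩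
    · simp [cnt]
    · rw [Finset.sum_eq_zero, Nat.descFactorial_eq_zero_iff_lt.2 (Finset.card_pos.2 ⟨a, ha⟩)]
      · simp
      · intro f _
        rw [if_neg, mul_zero]
        intro h
        have := h a (hSA ha)
        simp [ha, cnt] at this
  | succ N ih =>
    intro S hSA
    have key : (∑ f : Fin (N+1) → X, (∏ v, p (f v)) *
        (if (∀ a ∈ A, cnt f a = if a ∈ S then 1 else 0) then (1:ℝ) else 0))
      = ∑ x : X, ∑ f : Fin N → X, (p x * ∏ v, p (f v)) *
          (if (∀ a ∈ A, cnt (Fin.cons x f) a = if a ∈ S then 1 else 0) then (1:ℝ) else 0) := by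
      rw [← (Fin.consEquiv (fun _ : Fin (N+1) => X)).sum_comp, Fintype.sum_prod_type]
      refine Finset.sum_congr rfl fun x _ => Finset.sum_congr rfl fun f _ => ?_
      rw [show (Fin.consEquiv (fun _ : Fin (N+1) => X)) (x, f) = Fin.cons x f from rfl]
      split_ifs <;> simp [Fin.prod_univ_succ]
    rw [key]
    have inner : ∀ x : X, (∑ f : Fin N → X, (p x * ∏ v, p (f v)) *
        (if (∀ a ∈ A, cnt (Fin.cons x f) a = if a ∈ S then 1 else 0) then (1:ℝ) else 0))
      = p x * (if x ∈ A then (if x ∈ S then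
          (N.descFactorial (S.erase x).card : ℝ) * (∏ a ∈ S.erase x, p a) *
            (∑ y ∈ Aᶜ, p y) ^ (N - (S.erase x).card) else 0)
        else (N.descFactorial S.card : ℝ) * (∏ a ∈ S, p a) *
            (∑ y ∈ Aᶜ, p y) ^ (N - S.card)) := by
      intro x
      by_cases hxA : x ∈ A
      · by_cases hxS : x ∈ S
        · rw [if_pos hxA, if_pos hxS, ← ih (S.erase x) ((S.erase_subset x).trans hSA),
            Finset.mul_sum]
          refine Finset.sum_congr rfl fun f _ => ?_
          rw [mul_assoc]
          congr 2
          apply if_congr _ rfl rfl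
          constructor
          · intro h a haA
            have := h a haA
            rw [cnt_cons] at this
            rcases eq_or_ne a x with rfl | hax
            · simp [hxS, Finset.mem_erase] at this ⊢; omega
            · simp [hax.symm, Finset.mem_erase, hax] at this ⊢; exact this
          · intro h a haA
            have := h a haA
            rw [cnt_cons]
            rcases eq_or_ne a x with rfl | hax
            · simp [hxS, Finset.mem_erase] at this ⊢; omega
            · simp [hax.symm, Finset.mem_erase, hax] at this ⊢; exact this
        · rw [if_pos hxA, if_neg hxS, mul_zero]
          refine Finset.sum_eq_zero fun f _ => ?_
          rw [if_neg, mul_zero]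
          intro h
          have := h x hxA
          rw [cnt_cons, if_pos rfl, if_neg hxS] at this
          omega
      · rw [if_neg hxA, ← ih S hSA, Finset.mul_sum]
        refine Finset.sum_congr rfl fun f _ => ?_
        rw [mul_assoc]
        congr 2
        apply if_congr _ rfl rfl
        apply forall_congr'; intro a
        apply imp_congr_right; intro haA
        rw [cnt_cons, if_neg (fun h => hxA (by rwa [h])), zero_add]
    rw [Finset.sum_congr rfl fun x _ => inner x]
    rw [← Finset.sum_filter_add_sum_filter_not Finset.univ (· ∈ A)]
    have e1 : (Finset.univ.filter (· ∈ A)) = A := by simp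
    have e2 : (Finset.univ.filter (· ∉ A)) = Aᶜ := by ext; simp
    rw [e1, e2]
    have e3 : ∀ x ∈ A, p x * (if x ∈ A then (if x ∈ S then
          (N.descFactorial (S.erase x).card : ℝ) * (∏ a ∈ S.erase x, p a) *
            (∑ y ∈ Aᶜ, p y) ^ (N - (S.erase x).card) else 0)
        else (N.descFactorial S.card : ℝ) * (∏ a ∈ S, p a) *
            (∑ y ∈ Aᶜ, p y) ^ (N - S.card))
      = if x ∈ S then (N.descFactorial (S.erase x).card : ℝ) *
            (∑ y ∈ Aᶜ, p y) ^ (N - (S.erase x).card) * (p x * ∏ a ∈ S.erase x, p a) else 0 := by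
      intro x hx
      rw [if_pos hx, mul_ite, mul_zero]
      exact if_congr Iff.rfl (by ring) rfl
    have e4 : ∀ x ∈ Aᶜ, p x * (if x ∈ A then (if x ∈ S then
          (N.descFactorial (S.erase x).card : ℝ) * (∏ a ∈ S.erase x, p a) *
            (∑ y ∈ Aᶜ, p y) ^ (N - (S.erase x).card) else 0)
        else (N.descFactorial S.card : ℝ) * (∏ a ∈ S, p a) *
            (∑ y ∈ Aᶜ, p y) ^ (N - S.card))
      = p x * ((N.descFactorial S.card : ℝ) * (∏ a ∈ S, p a) *
            (∑ y ∈ Aᶜ, p y) ^ (N - S.card)) := by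
      intro x hx
      rw [if_neg (by simpa using hx)]
    rw [Finset.sum_congr rfl e3, Finset.sum_congr rfl e4, ← Finset.sum_mul,
      Finset.sum_ite_mem, Finset.inter_eq_right.2 hSA]
    have e5 : ∀ x ∈ S, (N.descFactorial (S.erase x).card : ℝ) *
            (∑ y ∈ Aᶜ, p y) ^ (N - (S.erase x).card) * (p x * ∏ a ∈ S.erase x, p a)
      = (N.descFactorial (S.card - 1) : ℝ) *
            (∑ y ∈ Aᶜ, p y) ^ (N - (S.card - 1)) * (∏ a ∈ S, p a) := by
      intro x hx
      rw [Finset.card_erase_of_mem hx, Finset.mul_prod_erase _ _ hx]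
    rw [Finset.sum_congr rfl e5, Finset.sum_const, nsmul_eq_mul]
    set R := ∑ y ∈ Aᶜ, p y
    set P := ∏ a ∈ S, p a
    rcases Nat.eq_zero_or_eq_succ_pred S.card with h0 | hs
    · rw [h0]
      simp [pow_succ]
      ring
    · set k := S.card with hk
      obtain ⟨m, hm⟩ : ∃ m, k = m + 1 := ⟨S.card - 1, hs⟩
      rw [hm]
      simp only [Nat.add_sub_cancel]
      rcases lt_or_ge N m with hNm | hmN
      · rw [Nat.descFactorial_eq_zero_iff_lt.2 (by omega : N < m + 1),
          Nat.descFactorial_eq_zero_iff_lt.2 hNm,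
          Nat.descFactorial_eq_zero_iff_lt.2 (by omega : N + 1 < m + 1)]
        push_cast; ring
      · rcases eq_or_lt_of_le hmN with h | hmN'
        · -- m = N
          subst h
          rw [Nat.descFactorial_eq_zero_iff_lt.2 (by omega : m < m + 1),
            Nat.succ_descFactorial_succ]
          simp only [show m - (m+1) = 0 from by omega, show m - m = 0 from by omega,
            show m + 1 - (m+1) = 0 from by omega, pow_zero]
          push_cast; ring
        · -- m < N
          obtain ⟨e, he⟩ : ∃ e, N = e + (m + 1) := ⟨N - (m+1), by omega⟩
          subst he
          rw [Nat.succ_descFactorial_succ, Nat.descFactorial_succ]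
          simp only [show e + (m+1) - (m+1) = e from by omega,
            show e + (m+1) - m = e + 1 from by omega,
            show e + (m+1) + 1 - (m+1) = e + 1 from by omega]
          push_cast [show e + (m+1) - m = e + 1 from by omega]
          rw [pow_succ]
          ring

lemma levelCount_eq {M N n : ℕ} (ω : Fin N → Fin M × Fin n) (s : Fin M) (i : Fin n) :
    levelCount ω s i = cnt ω (s, i) := by
  unfold levelCount cnt
  congr 1
  apply Finset.filter_congr
  intro v _
  simp [Prod.ext_iff]

lemma card_decoded {M N n : ℕ} (ω : Fin N → Fin M × Fin n) :
    ((Finset.univ.filter fun u : Fin N => sanpcDecoded ω u).card : ℝ)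
      = ∑ x : Fin M × Fin n,
          (if (cnt ω (x.1, x.2) = 1 ∧ ∀ j < x.2, cnt ω (x.1, j) ≤ 1) then (1:ℝ) else 0) := by
  rw [Finset.card_eq_sum_card_fiberwise (f := ω) (t := Finset.univ) (fun u _ => Finset.mem_univ _)]
  push_cast
  refine Finset.sum_congr rfl fun x _ => ?_
  rw [Finset.filter_filter]
  by_cases hE : (cnt ω (x.1, x.2) = 1 ∧ ∀ j < x.2, cnt ω (x.1, j) ≤ 1)
  · rw [if_pos hE]
    have h1 : (Finset.univ.filter fun u : Fin N => sanpcDecoded ω u ∧ ω u = x)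
        = Finset.univ.filter fun u => ω u = x := by
      ext u
      simp only [Finset.mem_filter, Finset.mem_univ, true_and, and_iff_right_iff_imp]
      intro h
      constructor
      · rw [levelCount_eq, h]; simpa using hE.1
      · intro j hj
        rw [levelCount_eq, h]
        exact hE.2 j (by rwa [h] at hj)
    rw [h1]
    have : (Finset.univ.filter fun u : Fin N => ω u = x).card = 1 := by
      simpa [cnt] using hE.1
    rw [this]; norm_num
  · rw [if_neg hE]
    norm_cast
    rw [Finset.card_eq_zero, Finset.filter_eq_empty_iff]
    rintro u -
    rintro ⟨⟨h1, h2⟩, rfl⟩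
    exact hE ⟨by simpa [levelCount_eq] using h1, fun j hj => by simpa [levelCount_eq] using h2 j hj⟩

lemma E_decomp {M N n : ℕ} (x : Fin M × Fin n) (ω : Fin N → Fin M × Fin n) :
    (if (cnt ω (x.1, x.2) = 1 ∧ ∀ j < x.2, cnt ω (x.1, j) ≤ 1) then (1:ℝ) else 0)
    = ∑ S ∈ (Finset.Iio x.2).powerset,
        (if (∀ a ∈ (Finset.Iic x.2).image (fun j => (x.1, j)),
              cnt ω a = if a ∈ (insert x.2 S).image (fun j => (x.1, j)) then 1 else 0)
          then (1:ℝ) else 0) := by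
  have hmem : ∀ (T : Finset (Fin n)) (j : Fin n),
      ((x.1, j) ∈ T.image (fun j => (x.1, j))) ↔ j ∈ T := by
    intro T j
    simp [Finset.mem_image, Prod.ext_iff]
  have htrans : ∀ S : Finset (Fin n),
      (∀ a ∈ (Finset.Iic x.2).image (fun j => (x.1, j)),
        cnt ω a = if a ∈ (insert x.2 S).image (fun j => (x.1, j)) then 1 else 0)
      ↔ (∀ j ∈ Finset.Iic x.2, cnt ω (x.1, j) = if j ∈ insert x.2 S then 1 else 0) := by
    intro S
    rw [Finset.forall_mem_image]
    refine forall_congr' fun j => imp_congr_right fun _ => ?_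
    simp only [hmem]
  rw [Finset.sum_congr rfl fun S _ => if_congr (htrans S) rfl rfl]
  rw [Finset.sum_boole]
  set S0 := (Finset.Iio x.2).filter (fun j => cnt ω (x.1, j) = 1) with hS0
  by_cases hE : (cnt ω (x.1, x.2) = 1 ∧ ∀ j < x.2, cnt ω (x.1, j) ≤ 1)
  · rw [if_pos hE]
    have : ((Finset.Iio x.2).powerset.filter fun S =>
        ∀ j ∈ Finset.Iic x.2, cnt ω (x.1, j) = if j ∈ insert x.2 S then 1 else 0) = {S0} := by
      ext S
      simp only [Finset.mem_filter, Finset.mem_powerset, Finset.mem_singleton]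
      constructor
      · rintro ⟨hsub, hQ⟩
        ext j
        simp only [hS0, Finset.mem_filter, Finset.mem_Iio]
        constructor
        · intro hjS
          have hjlt : j < x.2 := Finset.mem_Iio.1 (hsub hjS)
          refine ⟨hjlt, ?_⟩
          have := hQ j (Finset.mem_Iic.2 hjlt.le)
          rwa [if_pos (Finset.mem_insert_of_mem hjS)] at this
        · rintro ⟨hjlt, hcnt⟩
          by_contra hjS
          have := hQ j (Finset.mem_Iic.2 hjlt.le)
          rw [if_neg (by simp [hjS, hjlt.ne])] at this
          omega
      · rintro rfl
        refine ⟨Finset.filter_subset _ _, ?_⟩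
        intro j hj
        rcases eq_or_lt_of_le (Finset.mem_Iic.1 hj) with rfl | hjlt
        · rw [if_pos (Finset.mem_insert_self _ _)]; exact hE.1
        · have hle := hE.2 j hjlt
          by_cases hc : cnt ω (x.1, j) = 1
          · rw [if_pos (Finset.mem_insert_of_mem (by simp [hS0, hjlt, hc]))]; exact hc
          · rw [if_neg (by simp [hS0, hjlt.ne, hc])]
            omega
    rw [this, Finset.card_singleton, Nat.cast_one]
  · rw [if_neg hE]
    have : ((Finset.Iio x.2).powerset.filter fun S =>
        ∀ j ∈ Finset.Iic x.2, cnt ω (x.1, j) = if j ∈ insert x.2 S then 1 else 0)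
        = ∅ := by
      rw [Finset.filter_eq_empty_iff]
      intro S hS hQ
      apply hE
      constructor
      · have := hQ x.2 (Finset.mem_Iic.2 le_rfl)
        rwa [if_pos (Finset.mem_insert_self _ _)] at this
      · intro j hj
        have := hQ j (Finset.mem_Iic.2 hj.le)
        split at this <;> omega
    rw [this, Finset.card_empty, Nat.cast_zero]

noncomputable def Phi {n : ℕ} (δ : Fin n → ℝ) (M N : ℕ) : ℝ :=
  ∑ i : Fin n, ∑ S ∈ (Finset.Iio i).powerset,
    (N.descFactorial (S.card + 1) : ℝ) *
      ((1 / (M:ℝ) * δ i) * ∏ j ∈ S, (1 / (M:ℝ) * δ j)) *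
      (1 - (∑ j ∈ Finset.Iic i, δ j) / M) ^ (N - (S.card + 1))

lemma expected_eq' {n : ℕ} (δ : Fin n → ℝ) (hδsum : ∑ i, δ i = 1) (M N : ℕ) (hM : 1 ≤ M) :
    (∑ ω : Fin N → Fin M × Fin n, sanpcWeight M N n δ ω *
      ∑ x : Fin M × Fin n,
        (if (cnt ω (x.1, x.2) = 1 ∧ ∀ j < x.2, cnt ω (x.1, j) ≤ 1) then (1:ℝ) else 0))
    = M * Phi δ M N := by
  classical
  set p : Fin M × Fin n → ℝ := fun y => 1 / (M:ℝ) * δ y.2 with hp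
  have hM0 : (M:ℝ) ≠ 0 := by positivity
  have hw : ∀ ω : Fin N → Fin M × Fin n, sanpcWeight M N n δ ω = ∏ u, p (ω u) := fun _ => rfl
  have hinj : ∀ s : Fin M, Function.Injective (fun j : Fin n => (s, j)) := by
    intro s a b h; simpa [Prod.ext_iff] using h
  simp only [hw, Finset.mul_sum]
  rw [Finset.sum_comm]
  have step2 : ∀ x : Fin M × Fin n,
      (∑ ω : Fin N → Fin M × Fin n, (∏ u, p (ω u)) *
        (if (cnt ω (x.1, x.2) = 1 ∧ ∀ j < x.2, cnt ω (x.1, j) ≤ 1) then (1:ℝ) else 0))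
      = ∑ S ∈ (Finset.Iio x.2).powerset,
          (N.descFactorial (S.card + 1) : ℝ) *
            ((1 / (M:ℝ) * δ x.2) * ∏ j ∈ S, (1 / (M:ℝ) * δ j)) *
            (1 - (∑ j ∈ Finset.Iic x.2, δ j) / M) ^ (N - (S.card + 1)) := by
    intro x
    have e1 : ∀ ω : Fin N → Fin M × Fin n, (∏ u, p (ω u)) *
        (if (cnt ω (x.1, x.2) = 1 ∧ ∀ j < x.2, cnt ω (x.1, j) ≤ 1) then (1:ℝ) else 0)
      = ∑ S ∈ (Finset.Iio x.2).powerset, (∏ u, p (ω u)) *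
          (if (∀ a ∈ (Finset.Iic x.2).image (fun j => (x.1, j)),
              cnt ω a = if a ∈ (insert x.2 S).image (fun j => (x.1, j)) then 1 else 0)
            then (1:ℝ) else 0) := by
      intro ω
      rw [E_decomp, Finset.mul_sum]
    rw [Finset.sum_congr rfl fun ω _ => e1 ω, Finset.sum_comm]
    refine Finset.sum_congr rfl fun S hS => ?_
    have hSIio : S ⊆ Finset.Iio x.2 := Finset.mem_powerset.1 hS
    have hx2S : x.2 ∉ S := fun h => absurd (Finset.mem_Iio.1 (hSIio h)) (lt_irrefl _)
    have hsub : insert x.2 S ⊆ Finset.Iic x.2 :=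
      Finset.insert_subset (Finset.mem_Iic.2 le_rfl)
        (hSIio.trans (Finset.Iio_subset_Iic_self))
    have hSfA : (insert x.2 S).image (fun j => (x.1, j))
        ⊆ (Finset.Iic x.2).image (fun j => (x.1, j)) := Finset.image_subset_image hsub
    rw [G_lemma p _ N _ hSfA]
    have hcard : ((insert x.2 S).image (fun j => (x.1, j))).card = S.card + 1 := by
      rw [Finset.card_image_of_injective _ (hinj x.1), Finset.card_insert_of_notMem hx2S]
    have hprod : (∏ a ∈ (insert x.2 S).image (fun j => (x.1, j)), p a)
        = (1 / (M:ℝ) * δ x.2) * ∏ j ∈ S, (1 / (M:ℝ) * δ j) := by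
      rw [Finset.prod_image (fun a _ b _ h => hinj x.1 h), Finset.prod_insert hx2S]
    have hR : (∑ y ∈ ((Finset.Iic x.2).image (fun j => (x.1, j)))ᶜ, p y)
        = 1 - (∑ j ∈ Finset.Iic x.2, δ j) / M := by
      have h1 : (∑ y ∈ ((Finset.Iic x.2).image (fun j => (x.1, j)))ᶜ, p y)
          + (∑ y ∈ (Finset.Iic x.2).image (fun j => (x.1, j)), p y)
          = ∑ y : Fin M × Fin n, p y := Finset.sum_compl_add_sum _ _
      have h2 : (∑ y : Fin M × Fin n, p y) = 1 := by
        rw [Fintype.sum_prod_type]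
        simp only [hp]
        rw [Finset.sum_congr rfl fun s _ => by rw [← Finset.mul_sum, hδsum, mul_one]]
        rw [Finset.sum_const, Finset.card_univ, Fintype.card_fin, nsmul_eq_mul]
        field_simp
      have h3 : (∑ y ∈ (Finset.Iic x.2).image (fun j => (x.1, j)), p y)
          = (∑ j ∈ Finset.Iic x.2, δ j) / M := by
        rw [Finset.sum_image (fun a _ b _ h => hinj x.1 h)]
        simp only [hp]
        rw [← Finset.mul_sum]
        ring
      rw [h3, h2] at h1
      linarith
    rw [hcard, hprod, hR]
  rw [Finset.sum_congr rfl fun x _ => step2 x]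
  rw [Fintype.sum_prod_type, Phi, Finset.sum_comm, Finset.mul_sum]
  simp only [Prod.snd]
  refine Finset.sum_congr rfl fun i _ => ?_
  rw [Finset.sum_const, Finset.card_univ, Fintype.card_fin, nsmul_eq_mul]


section Limits
variable {g : ℝ} (hg : 0 < g)

/-- N M := ⌊g M⌋ tends to infinity. -/
lemma hN_atTop (hg : 0 < g) : Tendsto (fun M : ℕ => ⌊g * (M : ℝ)⌋₊) atTop atTop :=
  tendsto_nat_floor_atTop.comp ((tendsto_natCast_atTop_atTop).const_mul_atTop hg)

lemma hNg (hg : 0 < g) :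
    Tendsto (fun M : ℕ => ((⌊g * (M : ℝ)⌋₊ : ℝ) / M)) atTop (nhds g) := by
  have h1 : Tendsto (fun M : ℕ => ((⌊g * (M : ℝ)⌋₊ : ℝ) / (g * M))) atTop (nhds 1) :=
    tendsto_nat_floor_div_atTop.comp ((tendsto_natCast_atTop_atTop).const_mul_atTop hg)
  have h2 := h1.mul_const g
  rw [one_mul] at h2
  refine h2.congr' ?_
  filter_upwards [eventually_ge_atTop 1] with M hM
  have hM0 : (M:ℝ) ≠ 0 := by positivity
  field_simp

lemma L1 (hg : 0 < g) (m : ℕ) :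
    Tendsto (fun M : ℕ => ((⌊g * (M : ℝ)⌋₊.descFactorial m : ℝ) / (M:ℝ) ^ m)) atTop
      (nhds (g ^ m)) := by
  have key : ∀ t : ℕ, Tendsto (fun M : ℕ => ((⌊g * (M : ℝ)⌋₊ - t : ℕ) : ℝ) / M) atTop
      (nhds g) := by
    intro t
    have h1 : Tendsto (fun M : ℕ => ((⌊g * (M : ℝ)⌋₊ : ℝ) / M - (t : ℝ) / M)) atTop
        (nhds (g - 0)) := (hNg hg).sub (tendsto_const_div_atTop_nhds_zero_nat (t:ℝ))
    rw [sub_zero] at h1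
    refine h1.congr' ?_
    filter_upwards [(hN_atTop hg).eventually (eventually_ge_atTop t)] with M hM
    rw [Nat.cast_sub hM, sub_div]
  have := tendsto_finset_prod (f := fun (t : ℕ) (M : ℕ) => ((⌊g * (M : ℝ)⌋₊ - t : ℕ) : ℝ) / M)
    (a := fun _ => g) (Finset.range m) (fun t _ => key t)
  rw [Finset.prod_const, Finset.card_range] at this
  refine this.congr fun M => ?_
  rw [Nat.descFactorial_eq_prod_range, Nat.cast_prod, Finset.prod_div_distrib,
    Finset.prod_const, Finset.card_range]

lemma L2 (hg : 0 < g) (c : ℝ) (hc0 : 0 ≤ c) (hc1 : c ≤ 1) (k : ℕ) :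
    Tendsto (fun M : ℕ => (1 - c / M) ^ (⌊g * (M : ℝ)⌋₊ - (k+1))) atTop
      (nhds (Real.exp (-(g * c)))) := by
  have hA : Tendsto (fun M : ℕ => ((⌊g * (M : ℝ)⌋₊ - (k+1) : ℕ) : ℝ) / M) atTop (nhds g) := by
    have h1 : Tendsto (fun M : ℕ => ((⌊g * (M : ℝ)⌋₊ : ℝ) / M - ((k+1) : ℝ) / M)) atTop
        (nhds (g - 0)) := (hNg hg).sub (tendsto_const_div_atTop_nhds_zero_nat _)
    rw [sub_zero] at h1
    refine h1.congr' ?_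
    filter_upwards [(hN_atTop hg).eventually (eventually_ge_atTop (k+1))] with M hM
    rw [Nat.cast_sub hM, sub_div]
    norm_num
  have hB : Tendsto (fun M : ℕ => (M : ℝ) * Real.log (1 - c / M)) atTop (nhds (-c)) := by
    have := (Real.tendsto_mul_log_one_add_div_atTop (-c)).comp
      (tendsto_natCast_atTop_atTop (R := ℝ))
    refine this.congr fun M => ?_
    simp only [Function.comp]
    rw [neg_div, ← sub_eq_add_neg]
  have hAB : Tendsto (fun M : ℕ => (((⌊g * (M : ℝ)⌋₊ - (k+1) : ℕ) : ℝ) / M) *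
      ((M : ℝ) * Real.log (1 - c / M))) atTop (nhds (g * (-c))) := hA.mul hB
  have hexp : Tendsto (fun M : ℕ => Real.exp ((((⌊g * (M : ℝ)⌋₊ - (k+1) : ℕ) : ℝ) / M) *
      ((M : ℝ) * Real.log (1 - c / M)))) atTop (nhds (Real.exp (g * (-c)))) :=
    (Real.continuous_exp.tendsto _).comp hAB
  rw [show g * (-c) = -(g * c) by ring] at hexp
  refine hexp.congr' ?_
  filter_upwards [eventually_ge_atTop 2] with M hM
  have hM0 : (0:ℝ) < M := by positivity
  have hpos : 0 < 1 - c / M := by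
    have h2 : (2:ℝ) ≤ M := by exact_mod_cast hM
    have : c / M ≤ 1 / 2 := by
      rw [div_le_div_iff₀ hM0 (by norm_num)]
      nlinarith
    linarith
  have hME : (M:ℝ) ≠ 0 := ne_of_gt hM0
  have heq : (((⌊g * (M : ℝ)⌋₊ - (k+1) : ℕ) : ℝ) / M) * ((M : ℝ) * Real.log (1 - c / M))
      = ((⌊g * (M : ℝ)⌋₊ - (k+1) : ℕ) : ℝ) * Real.log (1 - c / M) := by
    field_simp
  rw [heq, Real.exp_nat_mul, Real.exp_log hpos]
end Limits

lemma value_eq {n : ℕ} (g : ℝ) (δ : Fin n → ℝ) :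
    (∑ i : Fin n, ∑ S ∈ (Finset.Iio i).powerset,
      g ^ (S.card + 1) * (δ i * ∏ j ∈ S, δ j) *
        Real.exp (-(g * ∑ j ∈ Finset.Iic i, δ j)))
    = ∑ i : Fin n,
        (∏ j ∈ Finset.Iio i, (1 + g * δ j) * Real.exp (-(g * δ j))) *
          (g * δ i * Real.exp (-(g * δ i))) := by
  refine Finset.sum_congr rfl fun i _ => ?_
  have hexp : Real.exp (-(g * ∑ j ∈ Finset.Iic i, δ j))
      = Real.exp (-(g * δ i)) * ∏ j ∈ Finset.Iio i, Real.exp (-(g * δ j)) := by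
    rw [← Finset.Iio_insert, Finset.sum_insert (by simp), ← Real.exp_sum, ← Real.exp_add]
    congr 1
    rw [mul_add, neg_add, Finset.mul_sum]
    simp
  have hterm : ∀ S ∈ (Finset.Iio i).powerset,
      g ^ (S.card + 1) * (δ i * ∏ j ∈ S, δ j) * Real.exp (-(g * ∑ j ∈ Finset.Iic i, δ j))
      = (g * δ i * Real.exp (-(g * ∑ j ∈ Finset.Iic i, δ j))) * ∏ j ∈ S, (g * δ j) := by
    intro S _
    rw [Finset.prod_mul_distrib, Finset.prod_const, pow_succ]
    ring
  rw [Finset.sum_congr rfl hterm, ← Finset.mul_sum]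
  have hps : (∑ S ∈ (Finset.Iio i).powerset, ∏ j ∈ S, (g * δ j))
      = ∏ j ∈ Finset.Iio i, (g * δ j + 1) := by
    rw [Finset.prod_add]
    refine Finset.sum_congr rfl fun S _ => ?_
    rw [Finset.prod_const_one, mul_one]
  rw [hps, hexp, Finset.prod_mul_distrib]
  have : ∏ j ∈ Finset.Iio i, (g * δ j + 1) = ∏ j ∈ Finset.Iio i, (1 + g * δ j) := by
    refine Finset.prod_congr rfl fun j _ => by ring
  rw [this]
  ring

lemma expected_eq {n : ℕ} (δ : Fin n → ℝ) (hδsum : ∑ i, δ i = 1) (M N : ℕ) (hM : 1 ≤ M) :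
    sanpcExpected M N n δ = M * Phi δ M N := by
  unfold sanpcExpected
  rw [Finset.sum_congr rfl fun ω _ => by rw [card_decoded ω]]
  exact expected_eq' δ hδsum M N hM

lemma Phi_tendsto {n : ℕ} {g : ℝ} (hg : 0 < g) (δ : Fin n → ℝ) (hδ : ∀ i, 0 ≤ δ i)
    (hδsum : ∑ i, δ i = 1) :
    Tendsto (fun M : ℕ => Phi δ M ⌊g * (M:ℝ)⌋₊) atTop
      (nhds (∑ i : Fin n, ∑ S ∈ (Finset.Iio i).powerset,
        g ^ (S.card + 1) * (δ i * ∏ j ∈ S, δ j) *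
          Real.exp (-(g * ∑ j ∈ Finset.Iic i, δ j)))) := by
  refine tendsto_finset_sum _ fun i _ => ?_
  refine tendsto_finset_sum _ fun S _ => ?_
  have hc0 : 0 ≤ ∑ j ∈ Finset.Iic i, δ j := Finset.sum_nonneg fun j _ => hδ j
  have hc1 : (∑ j ∈ Finset.Iic i, δ j) ≤ 1 := by
    rw [← hδsum]
    exact Finset.sum_le_sum_of_subset_of_nonneg (Finset.subset_univ _) (fun j _ _ => hδ j)
  have h1 := ((L1 hg (S.card + 1)).mul_const (δ i * ∏ j ∈ S, δ j)).mul
    (L2 hg _ hc0 hc1 S.card)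
  refine h1.congr fun M => ?_
  congr 1
  rw [Finset.prod_mul_distrib, Finset.prod_const]
  ring

/-- The asymptotic throughput of SA-nPC at load `g` with power-choice distribution `δ` is
`∑_{i=1}^{n} (∏_{j=1}^{i-1} (1+gδⱼ) e^{-gδⱼ}) gδᵢ e^{-gδᵢ}`. -/
theorem sa_npc_asymptotic_throughput (g : ℝ) (hg : 0 < g) (n : ℕ) (hn : 1 ≤ n)
    (δ : Fin n → ℝ) (hδ : ∀ i, 0 ≤ δ i) (hδsum : ∑ i, δ i = 1) :
    Tendsto (fun M : ℕ => sanpcExpected M ⌊g * (M : ℝ)⌋₊ n δ / (M : ℝ)) atTop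
      (nhds (∑ i : Fin n,
        (∏ j ∈ Finset.Iio i, (1 + g * δ j) * Real.exp (-(g * δ j))) *
          (g * δ i * Real.exp (-(g * δ i))))) := by
  have key := Phi_tendsto hg δ hδ hδsum
  rw [value_eq] at key
  refine key.congr' ?_
  filter_upwards [eventually_ge_atTop 1] with M hM
  have hM0 : (M:ℝ) ≠ 0 := by positivity
  rw [expected_eq δ hδsum M ⌊g * (M:ℝ)⌋₊ hM, mul_comm (M:ℝ), mul_div_assoc, div_self hM0, mul_one]
end

section
/- (Upper Bound 1) Let Λ be a repetition distribution with rate R and edge-perspective distribution λ, let T > 0 and δ ∈ [0,1], and set a = RT. If the density-evolution success condition λ(f_p(q)) ≤ q holds for every q ∈ (0,1], then (δ² − 2)/(RT) + exp(−RT)·((1 − δ²)/(RT) + δ(1−δ)) + exp(−RTδ)/(RT) + 1/R ≤ 0. -/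
/-- The slot-node density-evolution update of IRSA-DPC:
`f_p(q) = 1 - (1-δ)e^{-aq} - δe^{-aδq} - δ(1-δ)aq e^{-aq}`. -/
noncomputable def fp (a δ q : ℝ) : ℝ :=
  1 - (1 - δ) * Real.exp (-(a * q)) - δ * Real.exp (-(a * δ * q)) -
    δ * (1 - δ) * a * q * Real.exp (-(a * q))

-- Auxiliary definitions and lemmas for the proof
noncomputable def FF (a δ q : ℝ) : ℝ :=
  q + (1 - δ) * Real.exp (-(a * q)) / a + Real.exp (-(a * δ * q)) / a +
    δ * (1 - δ) * (q + 1 / a) * Real.exp (-(a * q))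

noncomputable def Gf (D : ℕ) (Λ : ℕ → ℝ) (R y : ℝ) : ℝ :=
  ∑ l ∈ Finset.Icc 1 D, (Λ l / R) * y ^ l

noncomputable def lamf (D : ℕ) (Λ : ℕ → ℝ) (R y : ℝ) : ℝ :=
  ∑ l ∈ Finset.Icc 1 D, ((l : ℝ) * Λ l / R) * y ^ (l - 1)

lemma expc_hasDerivAt (c q : ℝ) :
    HasDerivAt (fun x : ℝ => Real.exp (-(c * x))) (-c * Real.exp (-(c * q))) q := by
  have h : HasDerivAt (fun x : ℝ => -(c * x)) (-c) q := by
    simpa using ((hasDerivAt_id q).const_mul c).fun_neg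
  simpa [mul_comm] using h.exp

lemma fp_hasDerivAt (a δ q : ℝ) :
    HasDerivAt (fp a δ)
      (a * (1 - δ) * (1 - δ + δ * (a * q)) * Real.exp (-(a * q))
        + a * δ ^ 2 * Real.exp (-(a * δ * q))) q := by
  have h1 := expc_hasDerivAt a q
  have h2 := expc_hasDerivAt (a * δ) q
  have hid : HasDerivAt (fun x : ℝ => δ * (1 - δ) * a * x) (δ * (1 - δ) * a) q := by
    simpa using (hasDerivAt_id q).const_mul (δ * (1 - δ) * a)
  have h3 := hid.fun_mul h1
  have h := (((hasDerivAt_const q (1 : ℝ)).fun_sub (h1.const_mul (1 - δ))).fun_sub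
      (h2.const_mul δ)).fun_sub h3
  have hfun : (fun x => 1 - (1 - δ) * Real.exp (-(a * x)) - δ * Real.exp (-(a * δ * x))
      - δ * (1 - δ) * a * x * Real.exp (-(a * x))) = fp a δ := by
    funext x; simp [fp]
  rw [hfun] at h
  refine h.congr_deriv ?_
  ring

lemma FF_hasDerivAt (a δ q : ℝ) (ha : a ≠ 0) :
    HasDerivAt (fun x => FF a δ x) (fp a δ q) q := by
  have h1 := expc_hasDerivAt a q
  have h2 := expc_hasDerivAt (a * δ) q
  have p1 := (h1.const_mul (1 - δ)).div_const a
  have p2 := h2.div_const a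
  have hlin : HasDerivAt (fun x : ℝ => δ * (1 - δ) * (x + 1 / a)) (δ * (1 - δ)) q := by
    simpa using ((hasDerivAt_id q).add_const (1 / a)).const_mul (δ * (1 - δ))
  have p3 := hlin.fun_mul h1
  have h := (((hasDerivAt_id' (x := q)).fun_add p1).fun_add p2).fun_add p3
  have hfun : (fun x : ℝ => x + (1 - δ) * Real.exp (-(a * x)) / a + Real.exp (-(a * δ * x)) / a
      + δ * (1 - δ) * (x + 1 / a) * Real.exp (-(a * x))) = fun x => FF a δ x := by
    funext x; simp [FF]
  rw [hfun] at h
  refine h.congr_deriv ?_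
  simp only [fp]
  field_simp
  ring

lemma Gf_hasDerivAt (D : ℕ) (Λ : ℕ → ℝ) (R y : ℝ) :
    HasDerivAt (fun x => Gf D Λ R x) (lamf D Λ R y) y := by
  have h : HasDerivAt (fun x => ∑ l ∈ Finset.Icc 1 D, (Λ l / R) * x ^ l)
      (∑ l ∈ Finset.Icc 1 D, (Λ l / R) * ((l : ℝ) * y ^ (l - 1))) y :=
    HasDerivAt.fun_sum fun l _ => (hasDerivAt_pow l y).const_mul (Λ l / R)
  have he : lamf D Λ R y = ∑ l ∈ Finset.Icc 1 D, (Λ l / R) * ((l : ℝ) * y ^ (l - 1)) :=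
    Finset.sum_congr rfl fun l _ => by ring
  rw [he]
  exact h

/-- **Upper Bound 1.** If the density-evolution success condition `λ(f_p(q)) ≤ q` holds for
every `q ∈ (0,1]` (with `a = RT`), where `λ(x) = ∑_l (l Λ_l / R) x^{l-1}` is the
edge-perspective distribution of the repetition distribution `Λ` with rate `R = ∑_l l Λ_l > 0`,
then the throughput `T` satisfies
`(δ²-2)/(RT) + e^{-RT}((1-δ²)/(RT) + δ(1-δ)) + e^{-RTδ}/(RT) + 1/R ≤ 0`. -/
theorem irsa_dpc_upper_bound_1 (D : ℕ) (Λ : ℕ → ℝ) (hΛ : ∀ l, 0 ≤ Λ l)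
    (hΛsum : ∑ l ∈ Finset.Icc 1 D, Λ l = 1)
    (R T δ : ℝ) (hR : R = ∑ l ∈ Finset.Icc 1 D, (l : ℝ) * Λ l) (hRpos : 0 < R)
    (hT : 0 < T) (hδ : δ ∈ Set.Icc (0 : ℝ) 1)
    (hDE : ∀ q ∈ Set.Ioc (0 : ℝ) 1,
      (∑ l ∈ Finset.Icc 1 D, ((l : ℝ) * Λ l / R) * (fp (R * T) δ q) ^ (l - 1)) ≤ q) :
    (δ ^ 2 - 2) / (R * T) +
        Real.exp (-(R * T)) * ((1 - δ ^ 2) / (R * T) + δ * (1 - δ)) +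
        Real.exp (-(R * T * δ)) / (R * T) + 1 / R ≤ 0 := by
  obtain ⟨hδ0, hδ1⟩ := hδ
  set a := R * T with ha
  have hapos : 0 < a := mul_pos hRpos hT
  have ha0 : a ≠ 0 := ne_of_gt hapos
  have hR0 : R ≠ 0 := ne_of_gt hRpos
  have h1δ : (0:ℝ) ≤ 1 - δ := by linarith
  -- the derivative of V
  have hVd : ∀ q : ℝ, HasDerivAt (fun x => FF a δ x - x * fp a δ x + Gf D Λ R (fp a δ x))
      ((a * (1 - δ) * (1 - δ + δ * (a * q)) * Real.exp (-(a * q))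
        + a * δ ^ 2 * Real.exp (-(a * δ * q))) * (lamf D Λ R (fp a δ q) - q)) q := by
    intro q
    have h1 := FF_hasDerivAt a δ q ha0
    have h2 := (hasDerivAt_id' (x := q)).fun_mul (fp_hasDerivAt a δ q)
    have h3 := (Gf_hasDerivAt D Λ R (fp a δ q)).comp q (fp_hasDerivAt a δ q)
    have h := (h1.fun_sub h2).fun_add h3
    simp only [Function.comp_def] at h
    refine h.congr_deriv ?_
    ring
  -- V is antitone on [0,1]
  have hanti : AntitoneOn (fun x => FF a δ x - x * fp a δ x + Gf D Λ R (fp a δ x))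
      (Set.Icc (0:ℝ) 1) := by
    apply antitoneOn_of_deriv_nonpos (convex_Icc 0 1)
    · exact fun q _ => ((hVd q).continuousAt).continuousWithinAt
    · exact fun q _ => (hVd q).differentiableAt.differentiableWithinAt
    · intro q hq
      rw [interior_Icc] at hq
      rw [(hVd q).deriv]
      apply mul_nonpos_iff.mpr
      left
      constructor
      · apply add_nonneg
        · apply mul_nonneg
          apply mul_nonneg
          apply mul_nonneg hapos.le h1δ
          · have : 0 ≤ δ * (a * q) := mul_nonneg hδ0 (mul_nonneg hapos.le hq.1.le)
            linarith
          · exact (Real.exp_pos _).le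
        · exact mul_nonneg (mul_nonneg hapos.le (sq_nonneg δ)) (Real.exp_pos _).le
      · have := hDE q ⟨hq.1, hq.2.le⟩
        simp only [lamf]
        linarith
  -- basic values
  have hfp0 : fp a δ 0 = 0 := by unfold fp; norm_num
  have hGf0 : Gf D Λ R 0 = 0 := by
    unfold Gf
    apply Finset.sum_eq_zero
    intro l hl
    have hl1 : 1 ≤ l := (Finset.mem_Icc.1 hl).1
    rw [zero_pow (by omega), mul_zero]
  have hGf1 : Gf D Λ R 1 = 1 / R := by
    unfold Gf
    simp only [one_pow, mul_one]
    rw [← Finset.sum_div, hΛsum]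
  -- fp a δ 1 ∈ [0,1]
  have hE1 : (0:ℝ) ≤ Real.exp (-(a * 1)) := (Real.exp_pos _).le
  have hE2 : (0:ℝ) ≤ Real.exp (-(a * δ * 1)) := (Real.exp_pos _).le
  have hfp1_le : fp a δ 1 ≤ 1 := by
    unfold fp
    have t1 : 0 ≤ (1 - δ) * Real.exp (-(a * 1)) := mul_nonneg h1δ hE1
    have t2 : 0 ≤ δ * Real.exp (-(a * δ * 1)) := mul_nonneg hδ0 hE2
    have t3 : 0 ≤ δ * (1 - δ) * a * 1 * Real.exp (-(a * 1)) := by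
      apply mul_nonneg _ hE1
      have := mul_nonneg (mul_nonneg hδ0 h1δ) hapos.le
      linarith
    linarith
  have hfp1_ge : 0 ≤ fp a δ 1 := by
    have key1 : (1 + a) * Real.exp (-(a * 1)) ≤ 1 := by
      have h2 : Real.exp a * Real.exp (-(a * 1)) = 1 := by
        rw [← Real.exp_add]; norm_num
      nlinarith [Real.add_one_le_exp a, hE1]
    have key2 : Real.exp (-(a * δ * 1)) ≤ 1 := by
      calc Real.exp (-(a * δ * 1)) ≤ Real.exp 0 := by
            apply Real.exp_le_exp.mpr
            have : 0 ≤ a * δ := mul_nonneg hapos.le hδ0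
            nlinarith
        _ = 1 := Real.exp_zero
    unfold fp
    have s1 : δ * Real.exp (-(a * δ * 1)) ≤ δ := by nlinarith
    have hint : 0 ≤ (1 - δ) * Real.exp (-(a * 1)) * (a - δ * a) := by
      apply mul_nonneg (mul_nonneg h1δ hE1)
      nlinarith
    nlinarith [mul_le_mul_of_nonneg_left key1 h1δ]
  -- monotone y ↦ y - Gf y on [0,1]
  have hmono : MonotoneOn (fun y => y - Gf D Λ R y) (Set.Icc (0:ℝ) 1) := by
    apply monotoneOn_of_deriv_nonneg (convex_Icc 0 1)
    · intro y _
      exact (((hasDerivAt_id' (x := y)).sub (Gf_hasDerivAt D Λ R y)).continuousAt).continuousWithinAt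
    · intro y _
      exact ((hasDerivAt_id' (x := y)).sub (Gf_hasDerivAt D Λ R y)).differentiableAt.differentiableWithinAt
    · intro y hy
      rw [interior_Icc] at hy
      rw [((hasDerivAt_id' (x := y)).fun_sub (Gf_hasDerivAt D Λ R y)).deriv]
      have hle : lamf D Λ R y ≤ 1 := by
        have hsum : ∑ l ∈ Finset.Icc 1 D, (l : ℝ) * Λ l / R = 1 := by
          rw [← Finset.sum_div, ← hR, div_self hR0]
        have : lamf D Λ R y ≤ ∑ l ∈ Finset.Icc 1 D, (l : ℝ) * Λ l / R := by
          apply Finset.sum_le_sum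
          intro l _
          have h0 : (0:ℝ) ≤ (l : ℝ) * Λ l / R :=
            div_nonneg (mul_nonneg (Nat.cast_nonneg l) (hΛ l)) hRpos.le
          have hy1 : y ^ (l - 1) ≤ 1 := pow_le_one₀ hy.1.le hy.2.le
          exact mul_le_of_le_one_right h0 hy1
        linarith
      linarith
  -- assemble
  have hv := hanti (Set.mem_Icc.mpr ⟨le_refl 0, zero_le_one⟩)
    (Set.mem_Icc.mpr ⟨zero_le_one, le_refl 1⟩) zero_le_one
  simp only at hv
  rw [hfp0, hGf0, mul_zero] at hv
  have hm := hmono (Set.mem_Icc.mpr ⟨hfp1_ge, hfp1_le⟩)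
    (Set.mem_Icc.mpr ⟨zero_le_one, le_refl 1⟩) hfp1_le
  simp only at hm
  rw [hGf1] at hm
  -- hv : FF a δ 1 - 1 * fp a δ 1 + Gf D Λ R (fp a δ 1) ≤ FF a δ 0 - 0 + 0
  -- hm : fp a δ 1 - Gf D Λ R (fp a δ 1) ≤ 1 - 1/R
  have hfinal : FF a δ 1 ≤ FF a δ 0 + 1 - 1 / R := by
    have hone : (1:ℝ) * fp a δ 1 = fp a δ 1 := one_mul _
    linarith [hv, hm]
  have hEq : (δ ^ 2 - 2) / a + Real.exp (-a) * ((1 - δ ^ 2) / a + δ * (1 - δ)) +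
      Real.exp (-(a * δ)) / a + 1 / R = FF a δ 1 - (FF a δ 0 + 1 - 1 / R) := by
    simp only [FF, mul_one, mul_zero, neg_zero, Real.exp_zero]
    ring
  rw [hEq]
  linarith
end

section
/- (Rate-Independent Upper Bound) Let R > 0, T > 0 and δ ∈ [0,1]. If (δ² − 2)/(RT) + exp(−RT)·((1 − δ²)/(RT) + δ(1−δ)) + exp(−RTδ)/(RT) + 1/R ≤ 0, then T ≤ 2 − δ². -/
/-- **Rate-Independent Upper Bound.** If the necessary condition of Upper Bound 1 holds,
namely `(δ²-2)/(RT) + e^{-RT}((1-δ²)/(RT) + δ(1-δ)) + e^{-RTδ}/(RT) + 1/R ≤ 0`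
with `R > 0`, `T > 0` and `δ ∈ [0,1]`, then `T ≤ 2 - δ²`. -/
theorem irsa_dpc_rate_independent_upper_bound (R T δ : ℝ) (hR : 0 < R) (hT : 0 < T)
    (hδ : δ ∈ Set.Icc (0 : ℝ) 1)
    (h : (δ ^ 2 - 2) / (R * T) +
        Real.exp (-(R * T)) * ((1 - δ ^ 2) / (R * T) + δ * (1 - δ)) +
        Real.exp (-(R * T * δ)) / (R * T) + 1 / R ≤ 0) :
    T ≤ 2 - δ ^ 2 := by
  obtain ⟨h0, h1⟩ := hδ
  have hRT : 0 < R * T := mul_pos hR hT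
  have e1 : 0 < Real.exp (-(R * T)) := Real.exp_pos _
  have e2 : 0 < Real.exp (-(R * T * δ)) := Real.exp_pos _
  have hδ2 : δ ^ 2 ≤ 1 := by nlinarith
  have k1 : 0 ≤ (1 - δ ^ 2) / (R * T) + δ * (1 - δ) :=
    add_nonneg (div_nonneg (by linarith) hRT.le) (mul_nonneg h0 (by linarith))
  have key : (δ ^ 2 - 2) / (R * T) + 1 / R ≤ 0 := by
    nlinarith [mul_nonneg e1.le k1, div_nonneg e2.le hRT.le]
  have h2 := mul_le_mul_of_nonneg_left key hRT.le
  rw [mul_add, mul_div_cancel₀ _ hRT.ne'] at h2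
  have : R * T * (1 / R) = T := by field_simp
  rw [this, mul_zero] at h2
  linarith
end

section
/- (Upper Bound 2) Let f : [0,1] → [0,1] be measurable and h : [0,1] → [0,1] be nondecreasing and convex with h(1) = 1, and suppose h(f(q)) ≤ q for every q ∈ (0,1]. Let q_c ∈ (0,1), set p_c = f(q_c), assume p_c < 1, and let l(p) = q_c + (1 − q_c)·(p − p_c)/(1 − p_c) be the line through (p_c, q_c) and (1,1). Then ∫₀¹ h(p) dp + ∫₀¹ f(q) dq + vol{ (p,q) ∈ [0,1]² : p_c ≤ p, l(p) ≤ q, f(q) ≤ p } ≤ 1, where vol denotes two-dimensional Lebesgue measure. -/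
open MeasureTheory

/-- **Upper Bound 2.** Let `f : [0,1] → [0,1]` be measurable and `h : [0,1] → [0,1]` be
nondecreasing and convex with `h(1) = 1`, and suppose `h(f(q)) ≤ q` for every `q ∈ (0,1]`.
Let `q_c ∈ (0,1)`, `p_c = f(q_c) < 1`, and let `l` be the line through `(p_c, q_c)` and
`(1,1)`. Then `∫₀¹ h + ∫₀¹ f + vol{(p,q) ∈ [0,1]² : p_c ≤ p, l(p) ≤ q, f(q) ≤ p} ≤ 1`. -/
theorem irsa_dpc_upper_bound_2 (f h : ℝ → ℝ)
    (hf : Measurable f) (hfmap : ∀ q ∈ Set.Icc (0 : ℝ) 1, f q ∈ Set.Icc (0 : ℝ) 1)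
    (hhmono : MonotoneOn h (Set.Icc (0 : ℝ) 1))
    (hhconv : ConvexOn ℝ (Set.Icc (0 : ℝ) 1) h)
    (hhmap : ∀ p ∈ Set.Icc (0 : ℝ) 1, h p ∈ Set.Icc (0 : ℝ) 1)
    (hh1 : h 1 = 1)
    (hDE : ∀ q ∈ Set.Ioc (0 : ℝ) 1, h (f q) ≤ q)
    (qc : ℝ) (hqc : qc ∈ Set.Ioo (0 : ℝ) 1)
    (pc : ℝ) (hpc : pc = f qc) (hpc1 : pc < 1)
    (l : ℝ → ℝ) (hl : ∀ p, l p = qc + (1 - qc) * (p - pc) / (1 - pc)) :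
    (∫ p in (0 : ℝ)..1, h p) + (∫ q in (0 : ℝ)..1, f q) +
      (volume {pq : ℝ × ℝ | pq.1 ∈ Set.Icc (0 : ℝ) 1 ∧ pq.2 ∈ Set.Icc (0 : ℝ) 1 ∧
        pc ≤ pq.1 ∧ l pq.1 ≤ pq.2 ∧ f pq.2 ≤ pq.1}).toReal ≤ 1 := by
  classical
  -- clamped version of h, globally monotone
  set h' : ℝ → ℝ := fun p => h (max 0 (min 1 p)) with hh'def
  have hclamp : ∀ p : ℝ, max 0 (min 1 p) ∈ Set.Icc (0 : ℝ) 1 :=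
    fun p => ⟨le_max_left _ _, max_le zero_le_one (min_le_left _ _)⟩
  have hh'eq : ∀ p ∈ Set.Icc (0 : ℝ) 1, h' p = h p := by
    intro p hp
    simp only [hh'def]
    rw [min_eq_right hp.2, max_eq_right hp.1]
  have hh'mono : Monotone h' := by
    intro a b hab
    exact hhmono (hclamp a) (hclamp b)
      (max_le_max le_rfl (min_le_min le_rfl hab))
  have hh'meas : Measurable h' := hh'mono.measurable
  have hpcmem : pc ∈ Set.Icc (0 : ℝ) 1 := by
    rw [hpc]; exact hfmap qc ⟨hqc.1.le, hqc.2.le⟩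
  -- the three regions
  set A : Set (ℝ × ℝ) := regionBetween (fun _ => (0 : ℝ)) h' (Set.Ioc 0 1) with hAdef
  set Bs : Set (ℝ × ℝ) := regionBetween (fun _ => (0 : ℝ)) f (Set.Ioc 0 1) with hBsdef
  set B : Set (ℝ × ℝ) := Prod.swap ⁻¹' Bs with hBdef
  set C : Set (ℝ × ℝ) := {pq : ℝ × ℝ | pq.1 ∈ Set.Icc (0 : ℝ) 1 ∧ pq.2 ∈ Set.Icc (0 : ℝ) 1 ∧
        pc ≤ pq.1 ∧ l pq.1 ≤ pq.2 ∧ f pq.2 ≤ pq.1} with hCdef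
  -- measurability
  have hAmeas : MeasurableSet A :=
    measurableSet_regionBetween measurable_const hh'meas measurableSet_Ioc
  have hBsmeas : MeasurableSet Bs :=
    measurableSet_regionBetween measurable_const hf measurableSet_Ioc
  have hBmeas : MeasurableSet B := hBsmeas.preimage measurable_swap
  have hlmeas : Measurable l := by
    have : l = fun p => qc + (1 - qc) * (p - pc) / (1 - pc) := funext hl
    rw [this]; fun_prop
  have hCmeas : MeasurableSet C := by
    have h1 : MeasurableSet {pq : ℝ × ℝ | pq.1 ∈ Set.Icc (0 : ℝ) 1} :=
      measurable_fst measurableSet_Icc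
    have h2 : MeasurableSet {pq : ℝ × ℝ | pq.2 ∈ Set.Icc (0 : ℝ) 1} :=
      measurable_snd measurableSet_Icc
    have h3 : MeasurableSet {pq : ℝ × ℝ | pc ≤ pq.1} :=
      measurableSet_le measurable_const measurable_fst
    have h4 : MeasurableSet {pq : ℝ × ℝ | l pq.1 ≤ pq.2} :=
      measurableSet_le (hlmeas.comp measurable_fst) measurable_snd
    have h5 : MeasurableSet {pq : ℝ × ℝ | f pq.2 ≤ pq.1} :=
      measurableSet_le (hf.comp measurable_snd) measurable_fst
    exact h1.inter (h2.inter (h3.inter (h4.inter h5)))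
  -- integrability
  have hfInt : IntegrableOn f (Set.Ioc (0 : ℝ) 1) := by
    refine Integrable.mono' (g := fun _ => (1 : ℝ)) ?_ hf.aestronglyMeasurable.restrict ?_
    · exact (integrableOn_const_iff (by simp)).mpr (Or.inr (by simp [Real.volume_Ioc]))
    · filter_upwards [ae_restrict_mem measurableSet_Ioc] with q hq
      have := hfmap q ⟨hq.1.le, hq.2⟩
      rw [Real.norm_eq_abs, abs_le]
      exact ⟨by linarith [this.1], this.2⟩
  have hh'Int : IntegrableOn h' (Set.Ioc (0 : ℝ) 1) := by
    refine Integrable.mono' (g := fun _ => (1 : ℝ)) ?_ hh'meas.aestronglyMeasurable.restrict ?_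
    · exact (integrableOn_const_iff (by simp)).mpr (Or.inr (by simp [Real.volume_Ioc]))
    · filter_upwards with p
      have := hhmap _ (hclamp p)
      rw [Real.norm_eq_abs, abs_le]
      exact ⟨by linarith [this.1], this.2⟩
  have hzInt : IntegrableOn (fun _ : ℝ => (0 : ℝ)) (Set.Ioc (0 : ℝ) 1) :=
    (integrable_zero _ _ _)
  -- volumes of A and B
  have volA : volume A = ENNReal.ofReal (∫ p in Set.Ioc (0 : ℝ) 1, h' p) := by
    rw [hAdef, Measure.volume_eq_prod,
      volume_regionBetween_eq_integral hzInt hh'Int measurableSet_Ioc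
        (fun p _ => (hhmap _ (hclamp p)).1)]
    congr 1
    simp
  have volBs : volume Bs = ENNReal.ofReal (∫ q in Set.Ioc (0 : ℝ) 1, f q) := by
    rw [hBsdef, Measure.volume_eq_prod,
      volume_regionBetween_eq_integral hzInt hfInt measurableSet_Ioc
        (fun q hq => (hfmap q ⟨hq.1.le, hq.2⟩).1)]
    congr 1
    simp
  have volB : volume B = ENNReal.ofReal (∫ q in Set.Ioc (0 : ℝ) 1, f q) := by
    rw [← volBs, hBdef, Measure.volume_eq_prod]
    exact Measure.measurePreserving_swap.measure_preimage hBsmeas.nullMeasurableSet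
  -- key line bound : h p ≤ l p on [pc, 1]
  have hpcqc : h pc ≤ qc := by rw [hpc]; exact hDE qc ⟨hqc.1, hqc.2.le⟩
  have hkey : ∀ p ∈ Set.Icc pc 1, h p ≤ l p := by
    intro p hp
    have h1pc : (0 : ℝ) < 1 - pc := by linarith
    set t : ℝ := (p - pc) / (1 - pc) with ht
    have ht0 : 0 ≤ t := div_nonneg (by linarith [hp.1]) h1pc.le
    have ht1 : t ≤ 1 := by
      rw [div_le_one h1pc]; linarith [hp.2]
    have hpeq : p = (1 - t) * pc + t * 1 := by
      field_simp [ht]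
      rw [ht]; field_simp; ring
    have hconv := hhconv.2 hpcmem (Set.right_mem_Icc.mpr zero_le_one)
      (by linarith : (0:ℝ) ≤ 1 - t) ht0 (by ring)
    rw [smul_eq_mul, smul_eq_mul, smul_eq_mul, smul_eq_mul] at hconv
    have : h p ≤ (1 - t) * h pc + t * h 1 := by rw [hpeq]; simpa using hconv
    have h2 : (1 - t) * h pc ≤ (1 - t) * qc :=
      mul_le_mul_of_nonneg_left hpcqc (by linarith)
    have hlp : l p = qc + (1 - qc) * t := by
      rw [hl p, ht]; ring
    rw [hlp, hh1] at *
    nlinarith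
  -- disjointness
  have hAB : Disjoint A B := by
    rw [Set.disjoint_left]
    rintro ⟨p, q⟩ ⟨hp1, hq2⟩ ⟨hq1, hp2⟩
    simp only [Set.mem_Ioo] at hq2 hp2
    have hpI : p ∈ Set.Icc (0 : ℝ) 1 := ⟨hp1.1.le, hp1.2⟩
    have hfqI : f q ∈ Set.Icc (0 : ℝ) 1 := hfmap q ⟨hq1.1.le, hq1.2⟩
    have h1 : h p ≤ h (f q) := hhmono hpI hfqI hp2.2.le
    have h2 : h (f q) ≤ q := hDE q hq1
    have h3 : q < h' p := hq2.2
    rw [hh'eq p hpI] at h3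
    linarith
  have hAC : Disjoint A C := by
    rw [Set.disjoint_left]
    rintro ⟨p, q⟩ ⟨hp1, hq2⟩ ⟨hpI, hqI, hpcp, hlpq, _⟩
    simp only [Set.mem_Ioo] at hq2
    have h3 : q < h' p := hq2.2
    rw [hh'eq p ⟨hp1.1.le, hp1.2⟩] at h3
    have h4 : h p ≤ l p := hkey p ⟨hpcp, hp1.2⟩
    linarith
  have hBC : Disjoint B C := by
    rw [Set.disjoint_left]
    rintro ⟨p, q⟩ ⟨hq1, hp2⟩ ⟨hpI, hqI, hpcp, hlpq, hfqp⟩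
    simp only [Set.mem_Ioo, Prod.fst_swap, Prod.snd_swap] at hp2 hfqp
    linarith [hp2.2]
  -- all contained in the unit square
  have hsq : volume (Set.Icc (0 : ℝ) 1 ×ˢ Set.Icc (0 : ℝ) 1) = 1 := by
    rw [Measure.volume_eq_prod, Measure.prod_prod, Real.volume_Icc]
    simp
  have hsub : A ∪ B ∪ C ⊆ Set.Icc (0 : ℝ) 1 ×ˢ Set.Icc (0 : ℝ) 1 := by
    rintro ⟨p, q⟩ ((⟨hp1, hq2⟩ | ⟨hq1, hp2⟩) | hc)
    · simp only [Set.mem_Ioo] at hq2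
      have := (hhmap _ (hclamp p)).2
      exact ⟨⟨hp1.1.le, hp1.2⟩, ⟨hq2.1.le, le_trans hq2.2.le this⟩⟩
    · simp only [Set.mem_Ioo, Prod.fst_swap, Prod.snd_swap] at hq1 hp2
      have := (hfmap q ⟨hq1.1.le, hq1.2⟩).2
      exact ⟨⟨hp2.1.le, le_trans hp2.2.le this⟩, ⟨hq1.1.le, hq1.2⟩⟩
    · exact ⟨hc.1, hc.2.1⟩
  -- the sum of volumes is at most 1
  have hsum : volume A + volume B + volume C ≤ 1 := by
    calc volume A + volume B + volume C
        = volume (A ∪ B ∪ C) := by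
          rw [measure_union (hAC.union_left hBC) hCmeas, measure_union hAB hBmeas]
      _ ≤ volume (Set.Icc (0 : ℝ) 1 ×ˢ Set.Icc (0 : ℝ) 1) := measure_mono hsub
      _ = 1 := hsq
  -- finiteness
  have hAne : volume A ≠ ⊤ := by rw [volA]; exact ENNReal.ofReal_ne_top
  have hBne : volume B ≠ ⊤ := by rw [volB]; exact ENNReal.ofReal_ne_top
  have hCne : volume C ≠ ⊤ := by
    refine ne_top_of_le_ne_top (by rw [hsq]; exact ENNReal.one_ne_top) (measure_mono ?_)
    intro x hx; exact hsub (Or.inr hx)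
  -- identify the interval integrals
  have hA0 : 0 ≤ ∫ p in Set.Ioc (0 : ℝ) 1, h' p :=
    setIntegral_nonneg measurableSet_Ioc (fun p _ => (hhmap _ (hclamp p)).1)
  have hB0 : 0 ≤ ∫ q in Set.Ioc (0 : ℝ) 1, f q :=
    setIntegral_nonneg measurableSet_Ioc (fun q hq => (hfmap q ⟨hq.1.le, hq.2⟩).1)
  have eqA : ∫ p in (0 : ℝ)..1, h p = (volume A).toReal := by
    rw [volA, ENNReal.toReal_ofReal hA0, intervalIntegral.integral_of_le zero_le_one]
    exact setIntegral_congr_fun measurableSet_Ioc (fun p hp => (hh'eq p ⟨hp.1.le, hp.2⟩).symm)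
  have eqB : ∫ q in (0 : ℝ)..1, f q = (volume B).toReal := by
    rw [volB, ENNReal.toReal_ofReal hB0, intervalIntegral.integral_of_le zero_le_one]
  rw [eqA, eqB]
  calc (volume A).toReal + (volume B).toReal + (volume C).toReal
      = (volume A + volume B + volume C).toReal := by
        rw [ENNReal.toReal_add (by finiteness) hCne, ENNReal.toReal_add hAne hBne]
    _ ≤ (1 : ENNReal).toReal := ENNReal.toReal_mono ENNReal.one_ne_top hsum
    _ = 1 := by simp
end

section
/- (Upper Bound 3) Let Λ(x) = ∑_{l=2}^{D} Λ_l x^l be a repetition distribution with no degree-1 term (Λ₁ = 0), with Λ₂ > 0, rate R = Λ'(1) > 0 and edge-perspective distribution λ(x) = Λ'(x)/R. Let T > 0, δ ∈ [0,1], a = RT. If λ(f_p(q)) < q for every q ∈ (0,1], then T ≤ 1 / ( 2·Λ₂·(1 + 2δ² − 2δ) ). -/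
lemma fp_nonneg (a δ q : ℝ) (ha : 0 < a) (hδ0 : 0 ≤ δ) (hδ1 : δ ≤ 1) (hq : 0 ≤ q) :
    0 ≤ fp a δ q := by
  have hx : 0 ≤ a * q := mul_nonneg ha.le hq
  set E := Real.exp (-(a * q)) with hE
  set F := Real.exp (-(a * δ * q)) with hF
  have hconv : F ≤ (1 - δ) + δ * E := by
    have := convexOn_exp.2 (Set.mem_univ (0:ℝ)) (Set.mem_univ (-(a*q)))
      (by linarith : (0:ℝ) ≤ 1 - δ) hδ0 (by ring)
    simp only [smul_eq_mul, mul_zero, zero_add, Real.exp_zero, mul_one] at this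
    calc F = Real.exp ((1-δ)*0 + δ * -(a*q)) := by rw [hF]; ring_nf
    _ ≤ _ := by simpa [smul_eq_mul] using this
  have h1 : a * q + 1 ≤ Real.exp (a * q) := Real.add_one_le_exp _
  have h2 : (0:ℝ) < E := Real.exp_pos _
  have h3 : E * Real.exp (a * q) = 1 := by
    rw [hE, ← Real.exp_add]; simp
  have hδF : δ * F ≤ δ * ((1 - δ) + δ * E) := mul_le_mul_of_nonneg_left hconv hδ0
  have hc : E * ((1 - δ + δ^2) + δ*(1-δ)*(a*q)) ≤ 1 - δ + δ^2 := by
    have hcpos : (0:ℝ) < 1 - δ + δ^2 := by nlinarith [sq_nonneg (1-2*δ)]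
    have h4 : (1 - δ + δ^2) + δ*(1-δ)*(a*q) ≤ (1 - δ + δ^2) * Real.exp (a*q) := by
      nlinarith [mul_nonneg hx (sq_nonneg (1-2*δ))]
    calc E * ((1 - δ + δ^2) + δ*(1-δ)*(a*q)) ≤ E * ((1 - δ + δ^2) * Real.exp (a*q)) :=
          mul_le_mul_of_nonneg_left h4 h2.le
    _ = (1 - δ + δ^2) * (E * Real.exp (a*q)) := by ring
    _ = 1 - δ + δ^2 := by rw [h3, mul_one]
  simp only [fp, ← hE, ← hF]
  nlinarith [hδF, hc]

lemma fp_hasDerivAt_zero (a δ : ℝ) :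
    HasDerivAt (fp a δ) (a * (1 - 2*δ + 2*δ^2)) 0 := by
  have h1 : HasDerivAt (fun q : ℝ => -(a*q)) (-a) 0 := by
    simpa using ((hasDerivAt_id (0:ℝ)).const_mul a).fun_neg
  have h2 : HasDerivAt (fun q : ℝ => -(a*δ*q)) (-(a*δ)) 0 := by
    simpa using ((hasDerivAt_id (0:ℝ)).const_mul (a*δ)).fun_neg
  have hE := h1.exp
  have hG := h2.exp
  have hqE := (hasDerivAt_id' (0:ℝ)).fun_mul hE
  have h := (((hasDerivAt_const (0:ℝ) (1:ℝ)).fun_sub (hE.const_mul (1-δ))).fun_sub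
      (hG.const_mul δ)).fun_sub (hqE.const_mul (δ*(1-δ)*a))
  have heq : fp a δ = fun q => 1 - (1-δ) * Real.exp (-(a*q)) - δ * Real.exp (-(a*δ*q))
      - (δ*(1-δ)*a) * (q * Real.exp (-(a*q))) := by
    funext q; simp only [fp]; ring
  rw [heq]
  refine h.congr_deriv ?_
  simp; ring

/-- **Upper Bound 3.** Let `Λ` be a repetition distribution with no degree-1 term,
`Λ₂ > 0`, rate `R = ∑_l l Λ_l > 0` and edge-perspective distribution
`λ(x) = ∑_l (l Λ_l / R) x^{l-1}`.  If the strict density-evolution condition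
`λ(f_p(q)) < q` holds for every `q ∈ (0,1]` (with `a = RT`, `T > 0`, `δ ∈ [0,1]`), then
`T ≤ 1 / (2 Λ₂ (1 + 2δ² - 2δ))`. -/
theorem irsa_dpc_upper_bound_3 (D : ℕ) (Λ : ℕ → ℝ) (hΛ : ∀ l, 0 ≤ Λ l)
    (hΛ1 : Λ 1 = 0) (hΛ2 : 0 < Λ 2)
    (hΛsum : ∑ l ∈ Finset.Icc 1 D, Λ l = 1)
    (R T δ : ℝ) (hR : R = ∑ l ∈ Finset.Icc 1 D, (l : ℝ) * Λ l) (hRpos : 0 < R)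
    (hT : 0 < T) (hδ : δ ∈ Set.Icc (0 : ℝ) 1)
    (hDE : ∀ q ∈ Set.Ioc (0 : ℝ) 1,
      (∑ l ∈ Finset.Icc 1 D, ((l : ℝ) * Λ l / R) * (fp (R * T) δ q) ^ (l - 1)) < q) :
    T ≤ 1 / (2 * Λ 2 * (1 + 2 * δ ^ 2 - 2 * δ)) := by
  obtain ⟨hδ0, hδ1⟩ := hδ
  have hapos : 0 < R * T := mul_pos hRpos hT
  have hD2 : 2 ≤ D := by
    by_contra h
    push_neg at h
    interval_cases D
    · simp at hΛsum
    · simp [hΛ1] at hΛsum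
  have h2mem : 2 ∈ Finset.Icc 1 D := Finset.mem_Icc.mpr ⟨one_le_two, hD2⟩
  -- key pointwise bound
  have key : ∀ q ∈ Set.Ioo (0:ℝ) 1, (2 * Λ 2 / R) * (fp (R*T) δ q / q) ≤ 1 := by
    intro q hq
    have hq0 : 0 < q := hq.1
    have hfp0 : 0 ≤ fp (R*T) δ q := fp_nonneg _ _ _ hapos hδ0 hδ1 hq0.le
    have hlt := hDE q ⟨hq.1, hq.2.le⟩
    have hsingle : ((2:ℕ) : ℝ) * Λ 2 / R * (fp (R*T) δ q) ^ (2 - 1) ≤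
        ∑ l ∈ Finset.Icc 1 D, ((l : ℝ) * Λ l / R) * (fp (R * T) δ q) ^ (l - 1) :=
      Finset.single_le_sum (f := fun l : ℕ => ((l : ℝ) * Λ l / R) * (fp (R * T) δ q) ^ (l - 1))
        (fun l _ => mul_nonneg
        (div_nonneg (mul_nonneg (Nat.cast_nonneg l) (hΛ l)) hRpos.le)
        (pow_nonneg hfp0 _)) h2mem
    have h1 : (2 * Λ 2 / R) * fp (R*T) δ q < q := by
      refine lt_of_le_of_lt ?_ hlt
      simpa using hsingle
    calc 2 * Λ 2 / R * (fp (R*T) δ q / q) = (2 * Λ 2 / R * fp (R*T) δ q) / q := by ring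
    _ ≤ 1 := (div_le_one hq0).mpr h1.le
  -- limit as q → 0⁺
  have hslope : Filter.Tendsto (fun q => fp (R*T) δ q / q) (nhdsWithin 0 (Set.Ioi 0))
      (nhds ((R*T) * (1 - 2*δ + 2*δ^2))) := by
    have h := (hasDerivAt_iff_tendsto_slope.mp (fp_hasDerivAt_zero (R*T) δ))
    have hmono : nhdsWithin (0:ℝ) (Set.Ioi 0) ≤ nhdsWithin 0 {(0:ℝ)}ᶜ :=
      nhdsWithin_mono _ (fun x hx => ne_of_gt hx)
    have h2 := h.mono_left hmono
    refine h2.congr (fun q => ?_)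
    have : fp (R*T) δ 0 = 0 := by norm_num [fp]
    simp [slope, this, div_eq_inv_mul]
  have hlim := hslope.const_mul (2 * Λ 2 / R)
  have hev : ∀ᶠ q in nhdsWithin (0:ℝ) (Set.Ioi 0),
      (2 * Λ 2 / R) * (fp (R*T) δ q / q) ≤ 1 := by
    filter_upwards [Ioo_mem_nhdsGT_of_mem (by constructor <;> norm_num :
      (0:ℝ) ∈ Set.Ico (0:ℝ) 1)] with q hq using key q hq
  have hle : (2 * Λ 2 / R) * ((R*T) * (1 - 2*δ + 2*δ^2)) ≤ 1 :=
    le_of_tendsto hlim hev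
  have hfac : 0 < 1 + 2 * δ ^ 2 - 2 * δ := by nlinarith [sq_nonneg (1 - 2*δ)]
  have hden : 0 < 2 * Λ 2 * (1 + 2 * δ ^ 2 - 2 * δ) := by positivity
  rw [le_div_iff₀ hden]
  have hRne : R ≠ 0 := hRpos.ne'
  have heq : 2 * Λ 2 / R * ((R*T) * (1 - 2*δ + 2*δ^2)) = 2 * Λ 2 * T * (1 - 2*δ + 2*δ^2) := by
    field_simp
  calc T * (2 * Λ 2 * (1 + 2 * δ ^ 2 - 2 * δ)) = 2 * Λ 2 * T * (1 - 2*δ + 2*δ^2) := by ring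
  _ ≤ 1 := by rw [← heq]; exact hle
end

section
/- For every natural number j and all reals q, δ ∈ [0,1]: (1−q)^j + 2δ(1−δ)·j·q·(1−q)^{j−1} + ∑_{t=2}^{j} δ·(1−δ)^t·C(j,t)·q^t·(1−q)^{j−t} = (1−q)^j + δ·((1−δq)^j − (1−q)^j) + j·δ(1−δ)·q·(1−q)^{j−1}, where terms involving j·(1−q)^{j−1} are interpreted as 0 when j = 0. -/
/-- Closed form of the probability that an edge incident to a slot node of degree `j+1`
with `t` of the other `j` edges unresolved becomes resolved in the IRSA-DPC slot-node
update: for all `j : ℕ` and `q, δ ∈ [0,1]`,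
`(1-q)^j + 2δ(1-δ) j q (1-q)^{j-1} + ∑_{t=2}^{j} δ(1-δ)^t C(j,t) q^t (1-q)^{j-t}
  = (1-q)^j + δ((1-δq)^j - (1-q)^j) + jδ(1-δ)q(1-q)^{j-1}`. -/
theorem irsa_dpc_wlt_sum_closed_form (j : ℕ) (q δ : ℝ)
    (hq : q ∈ Set.Icc (0 : ℝ) 1) (hδ : δ ∈ Set.Icc (0 : ℝ) 1) :
    (1 - q) ^ j + 2 * δ * (1 - δ) * (j : ℝ) * q * (1 - q) ^ (j - 1) +
        ∑ t ∈ Finset.Icc 2 j, δ * (1 - δ) ^ t * (j.choose t : ℝ) * q ^ t * (1 - q) ^ (j - t) =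
      (1 - q) ^ j + δ * ((1 - δ * q) ^ j - (1 - q) ^ j) +
        (j : ℝ) * δ * (1 - δ) * q * (1 - q) ^ (j - 1) := by
  have key : ((1 - δ) * q + (1 - q)) ^ j
      = ∑ t ∈ Finset.range (j + 1), ((1 - δ) * q) ^ t * (1 - q) ^ (j - t) * (j.choose t : ℝ) :=
    add_pow _ _ j
  have h1q : ((1 : ℝ) - δ) * q + (1 - q) = 1 - δ * q := by ring
  rw [h1q] at key
  have hsum : δ * (1 - δ * q) ^ j
      = ∑ t ∈ Finset.range (j + 1),
          δ * (1 - δ) ^ t * (j.choose t : ℝ) * q ^ t * (1 - q) ^ (j - t) := by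
    rw [key, Finset.mul_sum]
    refine Finset.sum_congr rfl fun t _ => ?_
    rw [mul_pow]; ring
  rcases j with _ | n
  · simp
  · have hIcc : Finset.Icc 2 (n + 1) = Finset.Ico 2 (n + 2) := (Finset.Ico_add_one_right_eq_Icc 2 (n+1)).symm
    rw [Finset.range_eq_Ico,
      Finset.sum_eq_sum_Ico_succ_bot (by omega : 0 < n + 2),
      Finset.sum_eq_sum_Ico_succ_bot (by omega : 1 < n + 2)] at hsum
    simp only [Nat.choose_zero_right, Nat.choose_one_right, Nat.cast_ofNat, Nat.cast_one,
      Nat.cast_add, pow_zero, pow_one, Nat.add_sub_cancel, Nat.sub_zero] at hsum ⊢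
    rw [hIcc]
    linear_combination -hsum
end

section
/- (Area lemma) Let f : [0,1] → [0,1] be measurable and h : [0,1] → [0,1] be nondecreasing, and suppose h(f(q)) ≤ q for every q ∈ (0,1]. Then ∫₀¹ h(p) dp + ∫₀¹ f(q) dq ≤ 1. -/
open MeasureTheory Set

/-- **Area lemma.** Let `f : [0,1] → [0,1]` be measurable and `h : [0,1] → [0,1]` be
nondecreasing, and suppose `h(f(q)) ≤ q` for every `q ∈ (0,1]`.  Then the areas under the
two EXIT curves satisfy `∫₀¹ h + ∫₀¹ f ≤ 1`. -/
theorem irsa_dpc_area_lemma (f h : ℝ → ℝ)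
    (hf : Measurable f) (hfmap : ∀ q ∈ Set.Icc (0 : ℝ) 1, f q ∈ Set.Icc (0 : ℝ) 1)
    (hhmono : MonotoneOn h (Set.Icc (0 : ℝ) 1))
    (hhmap : ∀ p ∈ Set.Icc (0 : ℝ) 1, h p ∈ Set.Icc (0 : ℝ) 1)
    (hDE : ∀ q ∈ Set.Ioc (0 : ℝ) 1, h (f q) ≤ q) :
    (∫ p in (0 : ℝ)..1, h p) + (∫ q in (0 : ℝ)..1, f q) ≤ 1 := by
  -- clamp to [0,1]
  set c : ℝ → ℝ := fun x => max 0 (min 1 x) with hc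
  have hcmem : ∀ x, c x ∈ Icc (0:ℝ) 1 := fun x =>
    ⟨le_max_left _ _, max_le zero_le_one (min_le_left _ _)⟩
  have hcmono : Monotone c := fun x y hxy =>
    max_le_max le_rfl (min_le_min le_rfl hxy)
  have hceq : ∀ x ∈ Icc (0:ℝ) 1, c x = x := by
    intro x hx
    simp [hc, min_eq_right hx.2, max_eq_right hx.1]
  set h' : ℝ → ℝ := fun x => h (c x) with hh'
  have h'mono : Monotone h' := fun x y hxy =>
    hhmono (hcmem x) (hcmem y) (hcmono hxy)
  have h'meas : Measurable h' := h'mono.measurable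
  have h'eq : ∀ x ∈ Icc (0:ℝ) 1, h' x = h x := fun x hx => by
    simp [hh', hceq x hx]
  -- measurability of h on the set
  have hhaesm : AEStronglyMeasurable h (volume.restrict (Ioc (0:ℝ) 1)) := by
    refine h'meas.aestronglyMeasurable.congr ?_
    filter_upwards [ae_restrict_mem measurableSet_Ioc] with x hx
    exact h'eq x ⟨le_of_lt hx.1, hx.2⟩
  -- integrability
  have hvol : volume (Ioc (0:ℝ) 1) ≠ ⊤ := by simp
  have hfint : IntegrableOn f (Ioc (0:ℝ) 1) := by
    refine Measure.integrableOn_of_bounded (M := 1) hvol hf.aestronglyMeasurable ?_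
    filter_upwards [ae_restrict_mem measurableSet_Ioc] with x hx
    have := hfmap x ⟨le_of_lt hx.1, hx.2⟩
    rw [Real.norm_eq_abs, abs_le]; exact ⟨by linarith [this.1], this.2⟩
  have hhint : IntegrableOn h (Ioc (0:ℝ) 1) := by
    have h'int : IntegrableOn h' (Ioc (0:ℝ) 1) := by
      refine Measure.integrableOn_of_bounded (M := 1) hvol h'meas.aestronglyMeasurable ?_
      filter_upwards [ae_restrict_mem measurableSet_Ioc] with x hx
      have := hhmap (c x) (hcmem x)
      rw [Real.norm_eq_abs, abs_le]; exact ⟨by linarith [this.1], this.2⟩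
    refine h'int.congr_fun (fun x hx => h'eq x ⟨le_of_lt hx.1, hx.2⟩) measurableSet_Ioc
  -- key lintegral inequality
  set μ : Measure ℝ := volume.restrict (Ioc (0:ℝ) 1) with hμ
  have f_nn : 0 ≤ᵐ[μ] f := by
    filter_upwards [ae_restrict_mem measurableSet_Ioc] with x hx
    exact (hfmap x ⟨le_of_lt hx.1, hx.2⟩).1
  have layer : ∫⁻ q, ENNReal.ofReal (f q) ∂μ = ∫⁻ t in Ioi 0, μ {a | t ≤ f a} :=
    lintegral_eq_lintegral_meas_le μ f_nn hf.aemeasurable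
  have tail_bound : ∀ t ∈ Ioc (0:ℝ) 1, μ {a | t ≤ f a} ≤ ENNReal.ofReal (1 - h t) := by
    intro t ht
    have hsub : {a | t ≤ f a} ∩ Ioc (0:ℝ) 1 ⊆ Icc (h t) 1 := by
      rintro a ⟨hta, ha⟩
      have hamem : a ∈ Icc (0:ℝ) 1 := ⟨le_of_lt ha.1, ha.2⟩
      have hfa := hfmap a hamem
      have h1 : h t ≤ h (f a) := hhmono ⟨le_of_lt ht.1, ht.2⟩ hfa hta
      exact ⟨h1.trans (hDE a ha), ha.2⟩
    calc μ {a | t ≤ f a} = volume ({a | t ≤ f a} ∩ Ioc (0:ℝ) 1) := by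
          rw [hμ, Measure.restrict_apply (measurableSet_le measurable_const hf)]
      _ ≤ volume (Icc (h t) 1) := measure_mono hsub
      _ = ENNReal.ofReal (1 - h t) := by rw [Real.volume_Icc]
  have tail_zero : ∀ t ∈ Ioi (1:ℝ), μ {a | t ≤ f a} = 0 := by
    intro t ht
    have : {a | t ≤ f a} ∩ Ioc (0:ℝ) 1 = ∅ := by
      ext a; simp only [mem_inter_iff, mem_setOf_eq, mem_Ioc, mem_empty_iff_false, iff_false]
      rintro ⟨hta, ha1, ha2⟩
      have := (hfmap a ⟨le_of_lt ha1, ha2⟩).2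
      linarith [mem_Ioi.mp ht]
    rw [hμ, Measure.restrict_apply (measurableSet_le measurable_const hf), this, measure_empty]
  have split : ∫⁻ t in Ioi (0:ℝ), μ {a | t ≤ f a} =
      (∫⁻ t in Ioc (0:ℝ) 1, μ {a | t ≤ f a}) + ∫⁻ t in Ioi (1:ℝ), μ {a | t ≤ f a} := by
    rw [← lintegral_union measurableSet_Ioi Ioc_disjoint_Ioi_same, Ioc_union_Ioi_eq_Ioi zero_le_one]
  have key : ∫⁻ q, ENNReal.ofReal (f q) ∂μ ≤ ∫⁻ t, ENNReal.ofReal (1 - h t) ∂μ := by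
    rw [layer, split]
    have z : ∫⁻ t in Ioi (1:ℝ), μ {a | t ≤ f a} = 0 := by
      have e : ∫⁻ t in Ioi (1:ℝ), μ {a | t ≤ f a} = ∫⁻ _ in Ioi (1:ℝ), (0:ENNReal) :=
        setLIntegral_congr_fun measurableSet_Ioi tail_zero
      simpa using e
    rw [z, add_zero, hμ]
    have h1m : Measurable (fun t => ENNReal.ofReal (1 - h' t)) :=
      (measurable_const.sub h'meas).ennreal_ofReal
    have hmae : AEMeasurable (fun t => ENNReal.ofReal (1 - h t))
        (volume.restrict (Ioc (0:ℝ) 1)) := by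
      refine h1m.aemeasurable.congr ?_
      filter_upwards [ae_restrict_mem measurableSet_Ioc] with x hx
      rw [h'eq x ⟨le_of_lt hx.1, hx.2⟩]
    exact setLIntegral_mono_ae hmae <| Filter.Eventually.of_forall tail_bound
  -- nonnegativity of 1 - h a.e.
  have hg_nn : 0 ≤ᵐ[μ] fun t => 1 - h t := by
    filter_upwards [ae_restrict_mem measurableSet_Ioc] with x hx
    have := (hhmap x ⟨le_of_lt hx.1, hx.2⟩).2
    simp only [Pi.zero_apply]; linarith
  have hgaesm : AEStronglyMeasurable (fun t => 1 - h t) μ :=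
    aestronglyMeasurable_const.sub hhaesm
  -- finiteness of the RHS lintegral
  have hfin : ∫⁻ t, ENNReal.ofReal (1 - h t) ∂μ ≠ ⊤ := by
    have hb : ∫⁻ t, ENNReal.ofReal (1 - h t) ∂μ ≤ ∫⁻ _, (1:ENNReal) ∂μ := by
      refine lintegral_mono_ae ?_
      filter_upwards [ae_restrict_mem measurableSet_Ioc] with x hx
      have := (hhmap x ⟨le_of_lt hx.1, hx.2⟩).1
      calc ENNReal.ofReal (1 - h x) ≤ ENNReal.ofReal 1 :=
            ENNReal.ofReal_le_ofReal (by linarith)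
        _ = 1 := ENNReal.ofReal_one
    refine ne_top_of_le_ne_top ?_ hb
    simp [hμ, Real.volume_Ioc]
  -- convert Bochner integrals to lintegrals
  have hA : ∫ q, f q ∂μ = (∫⁻ q, ENNReal.ofReal (f q) ∂μ).toReal :=
    integral_eq_lintegral_of_nonneg_ae f_nn hf.aestronglyMeasurable
  have hB : ∫ t, (1 - h t) ∂μ = (∫⁻ t, ENNReal.ofReal (1 - h t) ∂μ).toReal :=
    integral_eq_lintegral_of_nonneg_ae hg_nn hgaesm
  have main : ∫ q, f q ∂μ ≤ ∫ t, (1 - h t) ∂μ := by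
    rw [hA, hB]
    exact ENNReal.toReal_mono hfin key
  -- compute ∫ (1 - h) = 1 - ∫ h
  have hsub : ∫ t, (1 - h t) ∂μ = 1 - ∫ t, h t ∂μ := by
    rw [integral_sub ((integrableOn_const_iff (C := (1:ℝ)) (by simp)).mpr (Or.inr (by simp [Real.volume_Ioc]))) hhint]
    simp [hμ, Real.volume_Ioc]
  rw [intervalIntegral.integral_of_le zero_le_one, intervalIntegral.integral_of_le zero_le_one]
  have : ∫ q, f q ∂μ ≤ 1 - ∫ t, h t ∂μ := hsub ▸ main
  rw [hμ] at this
  linarith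
end

section
/- For every g > 0 and every δ ∈ (0,1): gδ·exp(−gδ) + (1 + gδ)·g(1−δ)·exp(−g) > g·exp(−g). That is, for every load g, the asymptotic throughput of SA-DPC with any nontrivial power-choice probability δ strictly exceeds the asymptotic throughput g·e^{−g} of vanilla slotted Aloha. -/
/-- For every load `g > 0` and every nontrivial power-choice probability `δ ∈ (0,1)`,
the asymptotic throughput of SA-DPC strictly exceeds that of vanilla slotted Aloha:
`gδ e^{-gδ} + (1+gδ) g(1-δ) e^{-g} > g e^{-g}`. -/
theorem sa_dpc_beats_sa (g δ : ℝ) (hg : 0 < g) (hδ : δ ∈ Set.Ioo (0 : ℝ) 1) :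
    g * δ * Real.exp (-(g * δ)) + (1 + g * δ) * (g * (1 - δ)) * Real.exp (-g) >
      g * Real.exp (-g) := by
  obtain ⟨h0, h1⟩ := hδ
  have ht : 0 < g - g * δ := by nlinarith
  have key : Real.exp (-(g * δ)) > Real.exp (-g) * (1 - (g - g * δ)) := by
    have : Real.exp (-(g * δ)) = Real.exp (-g) * Real.exp (g - g * δ) := by
      rw [← Real.exp_add]; ring_nf
    rw [this]
    have he : Real.exp (g - g * δ) > 1 - (g - g * δ) := by
      have := Real.add_one_lt_exp ht.ne'
      linarith
    nlinarith [Real.exp_pos (-g)]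
  nlinarith [Real.exp_pos (-g), mul_pos hg h0]
end

section
/- With g = 7/4 and δ = 2/5, the SA-DPC asymptotic throughput satisfies gδ·exp(−gδ) + (1 + gδ)·g(1−δ)·exp(−g) > 0.65; in particular SA-DPC achieves an asymptotic throughput strictly greater than 0.65 (compared with the slotted-Aloha capacity 1/e ≈ 0.368). -/
open Finset in
lemma exp_neg_lower {x : ℝ} (hx0 : 0 ≤ x) (hx1 : x ≤ 1) :
    Real.exp (-x) ≥ (∑ m ∈ range 8, (-x) ^ m / m.factorial) - x ^ 8 * (9 / (Nat.factorial 8 * 8)) := by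
  have habs : |(-x)| ≤ 1 := by rw [abs_neg, abs_of_nonneg hx0]; exact hx1
  have h := Real.exp_bound habs (n := 8) (by norm_num)
  have h2 := abs_le.mp h
  have : |(-x)| = x := by rw [abs_neg, abs_of_nonneg hx0]
  rw [this] at h2
  have := h2.1
  push_cast at this ⊢
  linarith

/-- With load `g = 7/4` and power-choice probability `δ = 2/5`, the SA-DPC asymptotic
throughput `gδ e^{-gδ} + (1+gδ) g(1-δ) e^{-g}` exceeds `0.65`. -/
theorem sa_dpc_throughput_above_065 :
    (7 / 4 : ℝ) * (2 / 5) * Real.exp (-((7 / 4 : ℝ) * (2 / 5))) +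
        (1 + (7 / 4 : ℝ) * (2 / 5)) * ((7 / 4 : ℝ) * (1 - 2 / 5)) * Real.exp (-(7 / 4 : ℝ)) >
      0.65 := by
  have h1 : Real.exp (-(7/10 : ℝ)) ≥ 0.4965 := by
    have := exp_neg_lower (x := 7/10) (by norm_num) (by norm_num)
    refine le_trans ?_ this
    simp [Finset.sum_range_succ, Nat.factorial]
    norm_num
  have h2 : Real.exp (-(7/8 : ℝ)) ≥ 0.4168 := by
    have := exp_neg_lower (x := 7/8) (by norm_num) (by norm_num)
    refine le_trans ?_ this
    simp [Finset.sum_range_succ, Nat.factorial]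
    norm_num
  have h3 : Real.exp (-(7/4 : ℝ)) = Real.exp (-(7/8)) * Real.exp (-(7/8)) := by
    rw [← Real.exp_add]; norm_num
  have h4 : Real.exp (-(7/8 : ℝ)) > 0 := Real.exp_pos _
  have h5 : Real.exp (-(7/4 : ℝ)) ≥ 0.4168 * 0.4168 := by
    rw [h3]; nlinarith
  have : -((7/4 : ℝ) * (2/5)) = -(7/10) := by norm_num
  rw [this]
  nlinarith [h1, h5]
end
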